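/- arXiv:1401.2836 — 11 statements merged into one kernel-verified Lean document; each statement's English description precedes it below -/
import Mathlib

section
/- Let S be a semiring (commutative, possibly without neutral elements) and let A be a nonempty subset of S such that there exists m ≥ 1 with ord(a) ≤ m for every a ∈ A. Then there exists n ≥ 1 such that ord(b) ≤ n for every b in the subsemiring ⟨A⟩ generated by A, and moreover there exists r ≥ 1 such that (2r)·b = r·b for every b ∈ ⟨A⟩. -/
/-- `nmul n a` is the `n`-fold sum `a + ⋯ + a` (for `n ≥ 1`; `nmul 0 a = a` is junk). -/
def nmul {S : Type*} [Add S] (n : ℕ) (a : S) : S :=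
  Nat.rec a (fun _ b => b + a) (n - 1)

/-- The set `{n·a : n ≥ 1}`. -/
def addOrbit {S : Type*} [Add S] (a : S) : Set S :=
  {x | ∃ n : ℕ, 1 ≤ n ∧ nmul n a = x}

/-- The subsemiring generated by `A`: the smallest subset of `S` containing `A`
and closed under addition and multiplication. -/
def genClosure {S : Type*} [Add S] [Mul S] (A : Set S) : Set S :=
  ⋂₀ {T : Set S | A ⊆ T ∧ (∀ x ∈ T, ∀ y ∈ T, x + y ∈ T) ∧ (∀ x ∈ T, ∀ y ∈ T, x * y ∈ T)}

section Aux

variable {S : Type*} [AddCommSemigroup S]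

private def Fa (a : S) : ℕ → S := Nat.rec a (fun _ b => b + a)

private lemma nmul_eq_Fa (n : ℕ) (a : S) : nmul n a = Fa a (n - 1) := rfl

private lemma Fa_succ (a : S) (n : ℕ) : Fa a (n + 1) = Fa a n + a := rfl

private lemma Fa_add (a : S) (p q : ℕ) : Fa a (p + q + 1) = Fa a p + Fa a q := by
  induction q with
  | zero => rfl
  | succ q ih =>
    have : p + (q + 1) + 1 = (p + q + 1) + 1 := by ring
    rw [this, Fa_succ, ih, Fa_succ, add_assoc]

private lemma nmul_succ (a : S) {k : ℕ} (hk : 1 ≤ k) :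
    nmul (k + 1) a = nmul k a + a := by
  rw [nmul_eq_Fa, nmul_eq_Fa]
  have h : k + 1 - 1 = (k - 1) + 1 := by omega
  rw [h, Fa_succ]

private lemma nmul_add_nmul {p q : ℕ} (hp : 1 ≤ p) (hq : 1 ≤ q) (a : S) :
    nmul (p + q) a = nmul p a + nmul q a := by
  rw [nmul_eq_Fa, nmul_eq_Fa, nmul_eq_Fa]
  have h : p + q - 1 = (p - 1) + (q - 1) + 1 := by omega
  rw [h, Fa_add]

private lemma Fa_add_elem (b c : S) (n : ℕ) : Fa (b + c) n = Fa b n + Fa c n := by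
  induction n with
  | zero => rfl
  | succ n ih => rw [Fa_succ, Fa_succ, Fa_succ, ih, add_add_add_comm]

private lemma nmul_add_elem (n : ℕ) (b c : S) :
    nmul n (b + c) = nmul n b + nmul n c := by
  rw [nmul_eq_Fa, nmul_eq_Fa, nmul_eq_Fa, Fa_add_elem]

private lemma Fa_mul [Mul S] (hdr : ∀ a b c : S, (a + b) * c = a * c + b * c)
    (a c : S) (n : ℕ) : Fa a n * c = Fa (a * c) n := by
  induction n with
  | zero => rfl
  | succ n ih => rw [Fa_succ, Fa_succ, hdr, ih]

private lemma nmul_mul [Mul S] (hdr : ∀ a b c : S, (a + b) * c = a * c + b * c)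
    (n : ℕ) (a c : S) : nmul n a * c = nmul n (a * c) := by
  rw [nmul_eq_Fa, nmul_eq_Fa, Fa_mul hdr]

/-- Periodicity propagates forward. -/
private lemma nmul_periodic {a : S} {i p : ℕ} (hi : 1 ≤ i) (hp : 1 ≤ p)
    (h : nmul (i + p) a = nmul i a) :
    ∀ n, i ≤ n → nmul (n + p) a = nmul n a := by
  intro n hn
  induction n, hn using Nat.le_induction with
  | base => exact h
  | succ n hn ih =>
    have h1 : n + 1 + p = (n + p) + 1 := by ring
    rw [h1, nmul_succ a (by omega), ih, nmul_succ a (by omega)]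

private lemma nmul_periodic_mul {a : S} {i p : ℕ} (hi : 1 ≤ i) (hp : 1 ≤ p)
    (h : nmul (i + p) a = nmul i a) :
    ∀ k, ∀ n, i ≤ n → nmul (n + k * p) a = nmul n a := by
  intro k
  induction k with
  | zero => simp
  | succ k ih =>
    intro n hn
    have h1 : n + (k + 1) * p = (n + k * p) + p := by ring
    rw [h1, nmul_periodic hi hp h _ (by omega), ih n hn]

end Aux

theorem stmt_0 {S : Type*} [AddCommSemigroup S] [CommSemigroup S]
    (hdl : ∀ a b c : S, a * (b + c) = a * b + a * c)
    (hdr : ∀ a b c : S, (a + b) * c = a * c + b * c)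
    (A : Set S) (hA : A.Nonempty) (m : ℕ) (hm : 1 ≤ m)
    (hbound : ∀ a ∈ A, (addOrbit a).Finite ∧ (addOrbit a).ncard ≤ m) :
    (∃ n : ℕ, 1 ≤ n ∧ ∀ b ∈ genClosure A, (addOrbit b).Finite ∧ (addOrbit b).ncard ≤ n) ∧
    (∃ r : ℕ, 1 ≤ r ∧ ∀ b ∈ genClosure A, nmul (2 * r) b = nmul r b) := by
  classical
  set r : ℕ := m * m.factorial with hrdef
  have hr : 1 ≤ r := Nat.mul_pos hm m.factorial_pos
  -- Step A: every element of A satisfies 2r·a = r·a.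
  have stepA : ∀ a ∈ A, nmul (2 * r) a = nmul r a := by
    intro a haA
    obtain ⟨hfin, hcard⟩ := hbound a haA
    -- find a collision among 1·a, …, (m+1)·a
    have hmap : ∀ k ∈ Finset.Icc 1 (m + 1), nmul k a ∈ hfin.toFinset := by
      intro k hk
      simp only [Finset.mem_Icc] at hk
      simp only [Set.Finite.mem_toFinset]
      exact ⟨k, hk.1, rfl⟩
    have hclt : hfin.toFinset.card < (Finset.Icc 1 (m + 1)).card := by
      rw [Nat.card_Icc]
      have : hfin.toFinset.card = (addOrbit a).ncard := (Set.ncard_eq_toFinset_card _ hfin).symm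
      omega
    obtain ⟨i, hi, j, hj, hne, heq⟩ :=
      Finset.exists_ne_map_eq_of_card_lt_of_maps_to hclt hmap
    simp only [Finset.mem_Icc] at hi hj
    -- wlog i < j
    obtain ⟨i, j, hij, hi1, hjm, heq⟩ :
        ∃ i j : ℕ, i < j ∧ 1 ≤ i ∧ j ≤ m + 1 ∧ nmul (i + (j - i)) a = nmul i a := by
      rcases lt_or_gt_of_ne hne with h | h
      · exact ⟨i, j, h, hi.1, hj.2, by rw [Nat.add_sub_cancel' h.le]; exact heq.symm⟩
      · exact ⟨j, i, h, hj.1, hi.2, by rw [Nat.add_sub_cancel' h.le]; exact heq⟩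
    set p : ℕ := j - i with hpdef
    have hp1 : 1 ≤ p := by omega
    have hpm : p ≤ m := by omega
    have him : i ≤ m := by omega
    have hpdvd : p ∣ m.factorial := Nat.dvd_factorial hp1 hpm
    obtain ⟨c, hc⟩ := hpdvd
    have h2r : 2 * r = r + (m * c) * p := by
      rw [hrdef, hc]; ring
    rw [h2r]
    exact nmul_periodic_mul hi1 hp1 heq (m * c) r (le_trans him (Nat.le_mul_of_pos_right m m.factorial_pos))
  -- Step D: the property 2r·b = r·b holds on the closure.
  have stepD : ∀ b ∈ genClosure A, nmul (2 * r) b = nmul r b := by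
    intro b hb
    have : b ∈ {b : S | nmul (2 * r) b = nmul r b} := by
      apply hb
      refine ⟨stepA, ?_, ?_⟩
      · intro x hx y hy
        simp only [Set.mem_setOf_eq] at *
        rw [nmul_add_elem, nmul_add_elem, hx, hy]
      · intro x hx y hy
        simp only [Set.mem_setOf_eq] at *
        rw [← nmul_mul hdr, ← nmul_mul hdr, hx]
    exact this
  refine ⟨⟨2 * r, by omega, ?_⟩, ⟨r, hr, stepD⟩⟩
  intro b hb
  have h2r := stepD b hb
  -- every nmul k b with k ≥ 1 equals nmul k' b for some 1 ≤ k' ≤ 2r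
  have key : ∀ k, 1 ≤ k → ∃ k', 1 ≤ k' ∧ k' ≤ 2 * r ∧ nmul k' b = nmul k b := by
    intro k
    induction k using Nat.strong_induction_on with
    | _ k ih =>
      intro hk1
      by_cases hk : k ≤ 2 * r
      · exact ⟨k, hk1, hk, rfl⟩
      · push_neg at hk
        have hstep : nmul k b = nmul (k - r) b := by
          have e1 : nmul k b = nmul (k - 2 * r) b + nmul (2 * r) b := by
            rw [← nmul_add_nmul (by omega) (by omega)]; congr 1; omega
          have e2 : nmul (k - r) b = nmul (k - 2 * r) b + nmul r b := by
            rw [← nmul_add_nmul (by omega) hr]; congr 1; omega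
          rw [e1, h2r, ← e2]
        obtain ⟨k', hk'1, hk'2, hk'eq⟩ := ih (k - r) (by omega) (by omega)
        exact ⟨k', hk'1, hk'2, by rw [hk'eq, ← hstep]⟩
  have hsub : addOrbit b ⊆ ↑((Finset.Icc 1 (2 * r)).image (fun k => nmul k b)) := by
    rintro x ⟨k, hk1, rfl⟩
    obtain ⟨k', h1, h2, heq⟩ := key k hk1
    exact Finset.mem_coe.2 (Finset.mem_image.2 ⟨k', Finset.mem_Icc.2 ⟨h1, h2⟩, heq⟩)
  have hfin : (addOrbit b).Finite :=
    Set.Finite.subset (Finset.finite_toSet _) hsub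
  refine ⟨hfin, ?_⟩
  calc (addOrbit b).ncard
      ≤ (↑((Finset.Icc 1 (2 * r)).image (fun k => nmul k b)) : Set S).ncard :=
        Set.ncard_le_ncard hsub (Finset.finite_toSet _)
    _ = ((Finset.Icc 1 (2 * r)).image (fun k => nmul k b)).card :=
        Set.ncard_coe_finset _
    _ ≤ (Finset.Icc 1 (2 * r)).card := Finset.card_image_le
    _ = 2 * r := by rw [Nat.card_Icc]; omega
end

section
/- Let S be a semiring (commutative, possibly without neutral elements), let w ∈ S, and let M = {n·w : n ≥ 1} ∪ {s·w : s ∈ S} ∪ {n·w + s·w : n ≥ 1, s ∈ S}. If a, b, c ∈ M and m ≥ 1 are such that m·a = m·b and m·c = w, then a = b. -/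
/-- The cyclic subsemimodule `𝒰(S)·w` of `S`. -/
def cyclicMod {S : Type*} [Add S] [Mul S] (w : S) : Set S :=
  {x | ∃ n : ℕ, 1 ≤ n ∧ nmul n w = x} ∪ {x | ∃ s : S, s * w = x} ∪
    {x | ∃ n : ℕ, 1 ≤ n ∧ ∃ s : S, nmul n w + s * w = x}

section aux

variable {S : Type*} [AddCommSemigroup S] [CommSemigroup S]

lemma nmul_ss (n : ℕ) (a : S) : nmul (n+2) a = nmul (n+1) a + a := rfl

lemma nmul_add' (n : ℕ) (x y : S) : nmul n (x + y) = nmul n x + nmul n y := by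
  induction n with
  | zero => rfl
  | succ n ih =>
    cases n with
    | zero => rfl
    | succ k =>
      rw [nmul_ss, nmul_ss, nmul_ss, ih]
      exact add_add_add_comm _ _ _ _

lemma mul_nmul' (hdl : ∀ a b c : S, a * (b + c) = a * b + a * c)
    (n : ℕ) (s x : S) : s * nmul n x = nmul n (s * x) := by
  induction n with
  | zero => rfl
  | succ n ih =>
    cases n with
    | zero => rfl
    | succ k => rw [nmul_ss, hdl, ih, nmul_ss]

lemma nmul_nmul' (k n : ℕ) (x : S) : nmul k (nmul n x) = nmul n (nmul k x) := by
  induction n with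
  | zero => rfl
  | succ n ih =>
    cases n with
    | zero => rfl
    | succ j => rw [nmul_ss, nmul_add', ih, nmul_ss]

/-- A "good" operator: commutes with `nmul`, with left multiplications, and is additive. -/
def GoodOp (f : S → S) : Prop :=
  (∀ n u, f (nmul n u) = nmul n (f u)) ∧ (∀ s u, f (s * u) = s * f u) ∧
    (∀ u v, f (u + v) = f u + f v)

lemma key (hdl : ∀ a b c : S, a * (b + c) = a * b + a * c)
    (w x : S) (hx : x ∈ cyclicMod w) :
    ∃ f : S → S, f w = x ∧ GoodOp f ∧ ∀ g : S → S, GoodOp g → ∀ u, g (f u) = f (g u) := by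
  rcases hx with (⟨n, -, hn⟩ | ⟨s, hs⟩) | ⟨n, -, s, hns⟩
  · refine ⟨fun u => nmul n u, hn, ⟨fun k u => nmul_nmul' n k u,
      fun s u => (mul_nmul' hdl n s u).symm, fun u v => nmul_add' n u v⟩, ?_⟩
    intro g hg u
    exact hg.1 n u
  · refine ⟨fun u => s * u, hs, ⟨fun k u => mul_nmul' hdl k s u,
      fun t u => mul_left_comm s t u, fun u v => hdl s u v⟩, ?_⟩
    intro g hg u
    exact hg.2.1 s u
  · refine ⟨fun u => nmul n u + s * u, hns, ⟨?_, ?_, ?_⟩, ?_⟩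
    · intro k u
      dsimp only
      rw [nmul_nmul' n k u, mul_nmul' hdl k s u, ← nmul_add']
    · intro t u
      rw [hdl t (nmul n u) (s * u), mul_nmul' hdl n t u, mul_left_comm t s u]
    · intro u v
      dsimp only
      rw [nmul_add', hdl s u v]
      exact add_add_add_comm _ _ _ _
    · intro g hg u
      rw [hg.2.2, hg.1, hg.2.1]

end aux

theorem stmt_3 {S : Type*} [AddCommSemigroup S] [CommSemigroup S]
    (hdl : ∀ a b c : S, a * (b + c) = a * b + a * c)
    (hdr : ∀ a b c : S, (a + b) * c = a * c + b * c)
    (w a b c : S) (ha : a ∈ cyclicMod w) (hb : b ∈ cyclicMod w) (hc : c ∈ cyclicMod w)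
    (m : ℕ) (hm : 1 ≤ m)
    (hab : nmul m a = nmul m b) (hcw : nmul m c = w) :
    a = b := by
  obtain ⟨f, hfw, hf, hfcomm⟩ := key hdl w c hc
  obtain ⟨g, hgw, hg, -⟩ := key hdl w a ha
  obtain ⟨h, hhw, hh, -⟩ := key hdl w b hb
  have hga : a = nmul m (f a) := by
    calc a = g w := hgw.symm
    _ = g (nmul m c) := by rw [hcw]
    _ = nmul m (g c) := hg.1 m c
    _ = nmul m (g (f w)) := by rw [hfw]
    _ = nmul m (f (g w)) := by rw [hfcomm g hg w]
    _ = nmul m (f a) := by rw [hgw]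
  have hhb : b = nmul m (f b) := by
    calc b = h w := hhw.symm
    _ = h (nmul m c) := by rw [hcw]
    _ = nmul m (h c) := hh.1 m c
    _ = nmul m (h (f w)) := by rw [hfw]
    _ = nmul m (f (h w)) := by rw [hfcomm h hh w]
    _ = nmul m (f b) := by rw [hhw]
  calc a = nmul m (f a) := hga
  _ = f (nmul m a) := (hf.1 m a).symm
  _ = f (nmul m b) := by rw [hab]
  _ = nmul m (f b) := hf.1 m b
  _ = b := hhb.symm
end

section
/- Let S be a semiring (commutative, possibly without neutral elements) that is additively divisible and bounded, i.e., there exists m ≥ 1 such that ord(a) ≤ m for every a ∈ S. Then S is additively idempotent. -/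
/-- Auxiliary: `iter a n = (n+1)·a`. -/
def iter {S : Type*} [Add S] (a : S) : ℕ → S :=
  fun n => Nat.rec a (fun _ b => b + a) n

lemma nmul_eq_iter {S : Type*} [Add S] (a : S) (n : ℕ) : nmul n a = iter a (n - 1) := rfl

lemma iter_succ {S : Type*} [Add S] (a : S) (n : ℕ) : iter a (n + 1) = iter a n + a := rfl

lemma iter_add {S : Type*} [AddCommSemigroup S] (a : S) (n k : ℕ) :
    iter a (n + k + 1) = iter a n + iter a k := by
  induction k with
  | zero => rfl
  | succ k ih =>
      show iter a (n + k + 1) + a = _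
      rw [ih, iter_succ, add_assoc]

lemma iter_shift {S : Type*} [Add S] (a : S) (i j : ℕ) (h : iter a i = iter a j) (t : ℕ) :
    iter a (i + t) = iter a (j + t) := by
  induction t with
  | zero => exact h
  | succ t ih => rw [← Nat.add_assoc, ← Nat.add_assoc, iter_succ, iter_succ, ih]

lemma iter_period {S : Type*} [Add S] (a : S) (i p : ℕ) (h : iter a (i + p) = iter a i) :
    ∀ n, i ≤ n → ∀ k, iter a (n + k * p) = iter a n := by
  intro n hn k
  induction k with
  | zero => simp
  | succ k ih =>
      have h1 : n + (k + 1) * p = (i + p) + (n - i + k * p) := by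
        rw [Nat.add_mul]; omega
      have h2 : iter a ((i + p) + (n - i + k * p)) = iter a (i + (n - i + k * p)) :=
        iter_shift a _ _ h _
      have h3 : i + (n - i + k * p) = n + k * p := by omega
      rw [h1, h2, h3, ih]

theorem stmt_4 {S : Type*} [AddCommSemigroup S] [CommSemigroup S]
    (hdl : ∀ a b c : S, a * (b + c) = a * b + a * c)
    (hdr : ∀ a b c : S, (a + b) * c = a * c + b * c)
    (hdiv : ∀ a : S, ∀ n : ℕ, 1 ≤ n → ∃ b : S, nmul n b = a)
    (m : ℕ) (hm : 1 ≤ m)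
    (hbound : ∀ a : S, (addOrbit a).Finite ∧ (addOrbit a).ncard ≤ m) :
    ∀ a : S, a + a = a := by
  set N := m * Nat.factorial m with hNdef
  have hmN : m ≤ N := Nat.le_mul_of_pos_right m (Nat.factorial_pos m)
  have hN1 : 1 ≤ N := le_trans hm hmN
  -- Key: for every x, `iter x (2N-1) = iter x (N-1)`, i.e. `(2N)·x = N·x`.
  have key : ∀ x : S, iter x (2 * N - 1) = iter x (N - 1) := by
    intro x
    obtain ⟨hfin, hcard⟩ := hbound x
    have hmaps : ∀ k ∈ Finset.range (m + 1), iter x k ∈ hfin.toFinset := by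
      intro k _
      rw [Set.Finite.mem_toFinset]
      exact ⟨k + 1, Nat.le_add_left 1 k, rfl⟩
    have hcard' : hfin.toFinset.card < (Finset.range (m + 1)).card := by
      rw [Finset.card_range, ← Set.ncard_eq_toFinset_card _ hfin]
      omega
    obtain ⟨i, hi, j, hj, hne, heq⟩ :=
      Finset.exists_ne_map_eq_of_card_lt_of_maps_to hcard' hmaps
    rw [Finset.mem_range] at hi hj
    -- extract a period p with 1 ≤ p, and index i₀ < m, with iter x (i₀ + p) = iter x i₀
    obtain ⟨i₀, p, hp1, hip, hper⟩ :
        ∃ i₀ p : ℕ, 1 ≤ p ∧ i₀ + p ≤ m ∧ iter x (i₀ + p) = iter x i₀ := by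
      rcases Nat.lt_or_ge i j with h | h
      · exact ⟨i, j - i, by omega, by omega, by rw [show i + (j - i) = j by omega]; exact heq.symm⟩
      · have h' : j < i := lt_of_le_of_ne h (Ne.symm hne)
        exact ⟨j, i - j, by omega, by omega, by rw [show j + (i - j) = i by omega]; exact heq⟩
    have hpN : p ∣ N := Dvd.dvd.mul_left (Nat.dvd_factorial hp1 (by omega)) m
    obtain ⟨c, hc⟩ := hpN
    have h2N : 2 * N - 1 = (N - 1) + c * p := by
      have : c * p = N := by rw [Nat.mul_comm, ← hc]
      omega
    rw [h2N]
    exact iter_period x i₀ p hper (N - 1) (by omega) c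
  intro a
  obtain ⟨b, hb⟩ := hdiv a N hN1
  rw [nmul_eq_iter] at hb
  have : iter b (N - 1) + iter b (N - 1) = iter b (N - 1) := by
    rw [← iter_add, show N - 1 + (N - 1) + 1 = 2 * N - 1 by omega, key b]
  rw [← hb]; exact this
end

section
/- Let S be a semiring (commutative, possibly without neutral elements) that is additively uniquely divisible and torsion (every element has finite order). Then S is additively idempotent. -/
lemma nmul_one' {S : Type*} [Add S] (a : S) : nmul 1 a = a := rfl

lemma nmul_succ' {S : Type*} [Add S] {n : ℕ} (hn : 1 ≤ n) (a : S) :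
    nmul (n + 1) a = nmul n a + a := by
  obtain ⟨m, rfl⟩ : ∃ m, n = m + 1 := ⟨n - 1, by omega⟩
  rfl

lemma nmul_add'_s5 {S : Type*} [AddCommSemigroup S] {m n : ℕ} (hm : 1 ≤ m) (hn : 1 ≤ n)
    (a : S) : nmul (m + n) a = nmul m a + nmul n a := by
  induction n with
  | zero => omega
  | succ n ih =>
    rcases Nat.eq_or_lt_of_le hn with h | h
    · simp [← h, nmul_succ' hm, nmul_one']
    · have hn' : 1 ≤ n := by omega
      rw [← Nat.add_assoc, nmul_succ' (by omega : 1 ≤ m + n), ih hn',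
        nmul_succ' hn', add_assoc]

lemma nmul_add_distrib {S : Type*} [AddCommSemigroup S] {n : ℕ} (hn : 1 ≤ n)
    (a b : S) : nmul n (a + b) = nmul n a + nmul n b := by
  induction n with
  | zero => omega
  | succ n ih =>
    rcases Nat.eq_or_lt_of_le hn with h | h
    · simp [← h, nmul_one']
    · have hn' : 1 ≤ n := by omega
      rw [nmul_succ' hn', nmul_succ' hn', nmul_succ' hn', ih hn']
      ac_rfl

theorem stmt_5 {S : Type*} [AddCommSemigroup S] [CommSemigroup S]
    (hdl : ∀ a b c : S, a * (b + c) = a * b + a * c)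
    (hdr : ∀ a b c : S, (a + b) * c = a * c + b * c)
    (hudiv : ∀ a : S, ∀ n : ℕ, 1 ≤ n → ∃! b : S, nmul n b = a)
    (htor : ∀ a : S, ∃ m n : ℕ, 1 ≤ m ∧ 1 ≤ n ∧ m ≠ n ∧ nmul m a = nmul n a) :
    ∀ a : S, a + a = a := by
  -- key lemma: if m·a = n·a with 1 ≤ m < n then a + a = a
  have key : ∀ (a : S) (m n : ℕ), 1 ≤ m → m < n → nmul m a = nmul n a → a + a = a := by
    intro a m n hm hlt heq
    set k := n - m with hk
    have hk1 : 1 ≤ k := by omega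
    have hnm : n = m + k := by omega
    -- m·a = m·a + k·a
    have h1 : nmul m a = nmul m a + nmul k a := by
      conv_lhs => rw [heq, hnm, nmul_add'_s5 hm hk1]
    -- m·a = m·a + t·(k·a) for all t ≥ 1
    have h2 : ∀ t : ℕ, 1 ≤ t → nmul m a = nmul m a + nmul t (nmul k a) := by
      intro t ht
      induction t with
      | zero => omega
      | succ t ih =>
        rcases Nat.eq_or_lt_of_le ht with h | h
        · rw [← h, nmul_one']; exact h1
        · have ht' : 1 ≤ t := by omega
          calc nmul m a = nmul m a + nmul k a := h1
            _ = (nmul m a + nmul t (nmul k a)) + nmul k a := by rw [← ih ht']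
            _ = nmul m a + (nmul t (nmul k a) + nmul k a) := add_assoc _ _ _
            _ = nmul m a + nmul (t + 1) (nmul k a) := by rw [nmul_succ' ht']
    -- hence m·a = m·(a + k·a), so a = a + k·a by unique divisibility
    have h3 : nmul m (a + nmul k a) = nmul m a := by
      rw [nmul_add_distrib hm, ← h2 m hm]
    have h4 : a + nmul k a = a := by
      obtain ⟨b, hb, hub⟩ := hudiv (nmul m a) m hm
      have e1 : a + nmul k a = b := hub _ h3
      have e2 : a = b := hub _ rfl
      rw [e1, ← e2]
    -- j·a = j·a + k·a for all j ≥ 1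
    have h5 : ∀ j : ℕ, 1 ≤ j → nmul j a + nmul k a = nmul j a := by
      intro j hj
      induction j with
      | zero => omega
      | succ j ih =>
        rcases Nat.eq_or_lt_of_le hj with h | h
        · rw [← h, nmul_one']; exact h4
        · have hj' : 1 ≤ j := by omega
          rw [nmul_succ' hj', add_assoc, add_comm a (nmul k a), ← add_assoc,
            ih hj']
    -- so k·(a+a) = k·a + k·a = k·a, and divide by k
    have h6 : nmul k (a + a) = nmul k a := by
      rw [nmul_add_distrib hk1, h5 k hk1]
    obtain ⟨b, hb, hub⟩ := hudiv (nmul k a) k hk1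
    have e1 : a + a = b := hub _ h6
    have e2 : a = b := hub _ rfl
    rw [e1, ← e2]
  intro a
  obtain ⟨m, n, hm, hn, hmn, heq⟩ := htor a
  rcases lt_or_gt_of_ne hmn with h | h
  · exact key a m n hm h heq
  · exact key a n m hn h heq.symm
end

section
/- Let R be a nonzero commutative ring, not necessarily unital, that is finitely generated as a ring (there is a finite subset generating R as a non-unital subring). Then R is not additively divisible: there exist a ∈ R and n ≥ 1 such that a ≠ n·b for every b ∈ R. -/
set_option maxHeartbeats 1000000

instance : IsJacobsonRing ℤ := by
  rw [isJacobsonRing_iff_prime_eq]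
  intro P hP
  by_cases hbot : P = ⊥
  · subst hbot
    refine le_antisymm ?_ Ideal.le_jacobson
    intro x hx
    have h1 := Ideal.mem_jacobson_bot.1 hx 1
    have h2 := Ideal.mem_jacobson_bot.1 hx (-1)
    rw [Int.isUnit_iff] at h1 h2
    have : x ∈ (⊥ : Ideal ℤ) := by
      simp only [Ideal.mem_bot]
      omega
    exact this
  · have hmax : P.IsMaximal := IsPrime.to_maximal_ideal hbot
    exact le_antisymm (sInf_le ⟨le_rfl, hmax⟩) Ideal.le_jacobson

lemma aux_field (K : Type*) [Field K] (hft : Algebra.FiniteType ℤ K)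
    (hu : ∀ n : ℕ, 1 ≤ n → IsUnit ((n : ℕ) : K)) : False := by
  haveI := hft
  haveI : Module.Finite ℤ K := finite_of_finite_type_of_isJacobsonRing ℤ K
  haveI : Algebra.IsIntegral ℤ K := Algebra.IsIntegral.of_finite ℤ K
  obtain ⟨q, hq⟩ := CharP.exists K
  rcases CharP.char_is_prime_or_zero K q with hprime | h0
  · have hq0 : ((q : ℕ) : K) = 0 := CharP.cast_eq_zero K q
    have := hu q hprime.one_lt.le
    rw [hq0] at this
    exact zero_ne_one (isUnit_zero_iff.mp this)
  · subst h0
    haveI : CharZero K := CharP.charP_to_charZero K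
    let f : ℚ →ₐ[ℤ] K := (algebraMap ℚ K).toIntAlgHom
    have hfinj : Function.Injective f := (algebraMap ℚ K).injective
    have hint : IsIntegral ℤ (f (1/2 : ℚ)) := Algebra.IsIntegral.isIntegral _
    have hint' : IsIntegral ℤ ((1/2 : ℚ)) := (isIntegral_algHom_iff f hfinj).mp hint
    obtain ⟨m, hm⟩ := IsIntegrallyClosed.isIntegral_iff.mp hint'
    have hm' : (m : ℚ) = 1/2 := hm
    have h2 : ((2 * m : ℤ) : ℚ) = 1 := by push_cast; rw [hm']; ring
    have : (2 * m : ℤ) = 1 := by exact_mod_cast h2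
    omega

lemma aux_ring (T : Type*) [CommRing T] [Nontrivial T] (hft : Algebra.FiniteType ℤ T)
    (hu : ∀ n : ℕ, 1 ≤ n → IsUnit ((n : ℕ) : T)) : False := by
  haveI := hft
  obtain ⟨M, hM⟩ := Ideal.exists_maximal T
  letI : Field (T ⧸ M) := Ideal.Quotient.field M
  have hft' : Algebra.FiniteType ℤ (T ⧸ M) :=
    Algebra.FiniteType.of_surjective (Ideal.Quotient.mkₐ ℤ M)
      (Ideal.Quotient.mkₐ_surjective ℤ M)
  refine aux_field (T ⧸ M) hft' (fun n hn => ?_)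
  have := (hu n hn).map (Ideal.Quotient.mk M)
  rwa [map_natCast] at this

theorem stmt_10 {R : Type*} [NonUnitalCommRing R] [Nontrivial R]
    (hfg : ∃ A : Set R, A.Finite ∧ NonUnitalSubring.closure A = ⊤) :
    ∃ (a : R) (n : ℕ), 1 ≤ n ∧ ∀ b : R, a ≠ n • b := by
  by_contra hcon
  push_neg at hcon
  obtain ⟨A, hAfin, hAgen⟩ := hfg
  set S := Unitization ℤ R with hS
  letI : CommRing S := Unitization.instCommRing
  let I : Ideal S := Ideal.span ((fun r : R => (r : S)) '' A)
  -- every `inr r` lies in `I`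
  have hmem : ∀ r : R, (r : S) ∈ I := by
    intro r
    let P : NonUnitalSubring R :=
      { carrier := {r : R | (r : S) ∈ I}
        zero_mem' := by
          show ((0 : R) : S) ∈ I
          rw [Unitization.inr_zero]; exact I.zero_mem
        add_mem' := fun {a b} ha hb => by
          show ((a + b : R) : S) ∈ I
          rw [Unitization.inr_add]; exact I.add_mem ha hb
        neg_mem' := fun {a} ha => by
          show ((-a : R) : S) ∈ I
          rw [Unitization.inr_neg]; exact I.neg_mem ha
        mul_mem' := fun {a b} ha hb => by
          show ((a * b : R) : S) ∈ I
          rw [Unitization.inr_mul]; exact I.mul_mem_left _ hb }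
    have hsub : A ⊆ (P : Set R) := fun a ha => Ideal.subset_span ⟨a, ha, rfl⟩
    have : r ∈ NonUnitalSubring.closure A := by rw [hAgen]; trivial
    exact NonUnitalSubring.closure_le.mpr hsub this
  -- elements of `I` have zero first component
  have hfst : ∀ x : S, x ∈ I → x = ((x.snd : R) : S) := by
    intro x hx
    have hker : I ≤ RingHom.ker (Unitization.fstHom ℤ R) := by
      rw [Ideal.span_le]
      rintro _ ⟨a, _, rfl⟩
      simp only [SetLike.mem_coe, RingHom.mem_ker]
      exact Unitization.fst_inr ℤ a
    have h0 : x.fst = 0 := hker hx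
    conv_lhs => rw [← Unitization.inl_fst_add_inr_snd_eq x]
    rw [h0]
    simp
  have hIfg : I.FG := Submodule.fg_span (hAfin.image _)
  -- Nakayama for each n
  have nak : ∀ n : ℕ, 1 ≤ n → ∃ c : S, c - 1 ∈ Ideal.span {(n : S)} ∧
      ∀ x ∈ I, c * x = 0 := by
    intro n hn
    have hle : I ≤ Ideal.span {(n : S)} • I := by
      intro x hx
      obtain ⟨b, hb⟩ := hcon x.snd n hn
      have hx' : x = (n : S) * ((b : R) : S) := by
        rw [hfst x hx, hb]
        have h1 : ((n • b : R) : S) = n • ((b : R) : S) := Unitization.inr_smul ℤ n b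
        rw [h1, nsmul_eq_mul]
      rw [hx']
      exact Submodule.smul_mem_smul (Ideal.subset_span rfl) (hmem b)
    obtain ⟨c, hc1, hc0⟩ :=
      Submodule.exists_sub_one_mem_and_smul_eq_zero_of_fg_of_le_smul
        (Ideal.span {(n : S)}) I hIfg hle
    exact ⟨c, hc1, fun x hx => hc0 x hx⟩
  -- the annihilator of I
  let Ann : Ideal S := Submodule.annihilator I
  have hAnnne : Ann ≠ ⊤ := by
    intro h
    obtain ⟨r0, hr0⟩ := exists_ne (0 : R)
    have h1 : (1 : S) ∈ Ann := h ▸ Submodule.mem_top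
    have := (Submodule.mem_annihilator.mp h1) _ (hmem r0)
    rw [one_smul] at this
    exact hr0 (Unitization.inr_injective (by rw [this, Unitization.inr_zero]))
  let T := S ⧸ Ann
  haveI : Nontrivial T := Ideal.Quotient.nontrivial_iff.mpr hAnnne
  let π : S →+* T := Ideal.Quotient.mk Ann
  -- every positive natural is a unit in T
  have hunit : ∀ n : ℕ, 1 ≤ n → IsUnit ((n : ℕ) : T) := by
    intro n hn
    obtain ⟨c, hc1, hc0⟩ := nak n hn
    obtain ⟨t, ht⟩ := Ideal.mem_span_singleton'.mp hc1
    have hcz : π c = 0 := by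
      rw [Ideal.Quotient.eq_zero_iff_mem]
      exact Submodule.mem_annihilator.mpr (fun x hx => by
        simpa [smul_eq_mul] using hc0 x hx)
    refine IsUnit.of_mul_eq_one (π (-t)) ?_
    have h1 : ((n : ℕ) : T) = π ((n : ℕ) : S) := (map_natCast π n).symm
    rw [h1, ← map_mul]
    have h2 : ((n : ℕ) : S) * (-t) = 1 - c := by
      rw [show ((n : ℕ) : S) * (-t) = -(t * ((n : ℕ) : S)) by ring, ht]; ring
    rw [h2, map_sub, map_one, hcz, sub_zero]
  -- T is a finitely generated ℤ-algebra
  have hadj : Algebra.adjoin ℤ ((fun r : R => π (r : S)) '' A) = ⊤ := by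
    rw [eq_top_iff]
    rintro x -
    obtain ⟨s, rfl⟩ := Ideal.Quotient.mk_surjective (I := Ann) x
    have hsnd : π ((s.snd : R) : S) ∈ Algebra.adjoin ℤ ((fun r : R => π (r : S)) '' A) := by
      let P : NonUnitalSubring R :=
        { carrier := {r : R | π (r : S) ∈ Algebra.adjoin ℤ ((fun r : R => π (r : S)) '' A)}
          zero_mem' := by
            show π ((0 : R) : S) ∈ Algebra.adjoin ℤ ((fun r : R => π (r : S)) '' A)
            rw [Unitization.inr_zero, map_zero]; exact Subalgebra.zero_mem _
          add_mem' := fun {a b} ha hb => by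
            show π ((a + b : R) : S) ∈ Algebra.adjoin ℤ ((fun r : R => π (r : S)) '' A)
            rw [Unitization.inr_add, map_add]; exact Subalgebra.add_mem _ ha hb
          neg_mem' := fun {a} ha => by
            show π ((-a : R) : S) ∈ Algebra.adjoin ℤ ((fun r : R => π (r : S)) '' A)
            rw [Unitization.inr_neg, map_neg]; exact Subalgebra.neg_mem _ ha
          mul_mem' := fun {a b} ha hb => by
            show π ((a * b : R) : S) ∈ Algebra.adjoin ℤ ((fun r : R => π (r : S)) '' A)
            rw [Unitization.inr_mul, map_mul]; exact Subalgebra.mul_mem _ ha hb }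
      have hsub : A ⊆ (P : Set R) := fun a ha => Algebra.subset_adjoin ⟨a, ha, rfl⟩
      have : s.snd ∈ NonUnitalSubring.closure A := by rw [hAgen]; trivial
      exact NonUnitalSubring.closure_le.mpr hsub this
    have hfst' : π (Unitization.inl s.fst) ∈
        Algebra.adjoin ℤ ((fun r : R => π (r : S)) '' A) := by
      have heq : π (Unitization.inl s.fst) = algebraMap ℤ T s.fst := by
        have h3 : π.comp (Unitization.inlRingHom ℤ R) = algebraMap ℤ T :=
          RingHom.ext_int _ _
        exact DFunLike.congr_fun h3 s.fst
      rw [heq]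
      exact Subalgebra.algebraMap_mem _ _
    have hdec : π s = π (Unitization.inl s.fst) + π ((s.snd : R) : S) := by
      rw [← map_add, Unitization.inl_fst_add_inr_snd_eq]
    rw [hdec]
    exact Subalgebra.add_mem _ hfst' hsnd
  have hTft : Algebra.FiniteType ℤ T :=
    ⟨⟨(hAfin.image (fun r : R => π (r : S))).toFinset, by
      rwa [Set.Finite.coe_toFinset]⟩⟩
  have hsub : (Ideal.Quotient.algebra ℤ : Algebra ℤ T) = Ring.toIntAlgebra T :=
    Subsingleton.elim _ _
  exact aux_ring T (hsub ▸ hTft) hunit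
end

section
/- Let S be an additively divisible semiring (commutative) possessing a multiplicative identity 1. Then S is additively uniquely divisible: for every a ∈ S and n ≥ 1 there exists exactly one b ∈ S with n·b = a. -/
lemma nmul_mul_left {S : Type*} [AddCommSemigroup S] [CommMonoid S]
    (hdl : ∀ a b c : S, a * (b + c) = a * b + a * c)
    (a b : S) (n : ℕ) : a * nmul n b = nmul n (a * b) := by
  unfold nmul
  induction n - 1 with
  | zero => rfl
  | succ k ih => simp only [hdl, ih]

lemma nmul_mul_right {S : Type*} [AddCommSemigroup S] [CommMonoid S]
    (hdr : ∀ a b c : S, (a + b) * c = a * c + b * c)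
    (a b : S) (n : ℕ) : (nmul n a) * b = nmul n (a * b) := by
  unfold nmul
  induction n - 1 with
  | zero => rfl
  | succ k ih => simp only [hdr, ih]

theorem stmt_11 {S : Type*} [AddCommSemigroup S] [CommMonoid S]
    (hdl : ∀ a b c : S, a * (b + c) = a * b + a * c)
    (hdr : ∀ a b c : S, (a + b) * c = a * c + b * c)
    (hdiv : ∀ a : S, ∀ n : ℕ, 1 ≤ n → ∃ b : S, nmul n b = a) :
    ∀ a : S, ∀ n : ℕ, 1 ≤ n → ∃! b : S, nmul n b = a := by
  intro a n hn
  obtain ⟨b, hb⟩ := hdiv a n hn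
  obtain ⟨e, he⟩ := hdiv 1 n hn
  have key : ∀ c : S, nmul n c = a → c = a * e := by
    intro c hc
    calc c = c * 1 := (mul_one c).symm
    _ = c * nmul n e := by rw [he]
    _ = nmul n (c * e) := nmul_mul_left hdl c e n
    _ = nmul n c * e := (nmul_mul_right hdr c e n).symm
    _ = a * e := by rw [hc]
  exact ⟨b, hb, fun c hc => by rw [key c hc, key b hb]⟩
end

section
/- Let S be an additively divisible semiring (commutative) possessing a multiplicative identity 1. If 1 has finite order (there exist m, n ≥ 1 with m ≠ n and m·1 = n·1), then S is additively idempotent. -/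
/-- Auxiliary: `f' k a = (k+1)·a`. -/
def f' {S : Type*} [Add S] (k : ℕ) (a : S) : S :=
  Nat.rec a (fun _ b => b + a) k

lemma nmul_eq_f' {S : Type*} [Add S] (n : ℕ) (a : S) : nmul n a = f' (n - 1) a := rfl

lemma f'_succ {S : Type*} [Add S] (k : ℕ) (a : S) : f' (k + 1) a = f' k a + a := rfl

lemma f'_add {S : Type*} [AddCommSemigroup S] (j k : ℕ) (a : S) :
    f' (j + k + 1) a = f' j a + f' k a := by
  induction k with
  | zero => rfl
  | succ k ih =>
    show f' (j + k + 1 + 1) a = f' j a + (f' k a + a)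
    rw [f'_succ, ih, add_assoc]

lemma mul_f' {S : Type*} [AddCommSemigroup S] [CommMonoid S]
    (hdl : ∀ a b c : S, a * (b + c) = a * b + a * c) (k : ℕ) (a b : S) :
    a * f' k b = f' k (a * b) := by
  induction k with
  | zero => rfl
  | succ k ih => rw [f'_succ, hdl, ih, f'_succ]

lemma key_13 {S : Type*} [AddCommSemigroup S] [CommMonoid S]
    (hdl : ∀ a b c : S, a * (b + c) = a * b + a * c)
    (hdiv : ∀ a : S, ∀ n : ℕ, 1 ≤ n → ∃ b : S, nmul n b = a)
    (m n : ℕ) (hm : 1 ≤ m) (hlt : m < n) (heq : nmul m (1 : S) = nmul n (1 : S)) :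
    ∀ a : S, a + a = a := by
  set M := m - 1 with hM
  set k := n - m with hk
  have hk1 : 1 ≤ k := by omega
  have heq' : f' (M + k) (1 : S) = f' M (1 : S) := by
    have : n - 1 = M + k := by omega
    rw [nmul_eq_f', nmul_eq_f', this] at heq
    exact heq.symm
  -- period k beyond M
  have hstep : ∀ d : ℕ, f' (M + d + k) (1 : S) = f' (M + d) (1 : S) := by
    intro d
    cases d with
    | zero => simpa using heq'
    | succ d =>
      have h1 : M + (d + 1) + k = (M + k) + d + 1 := by omega
      rw [h1, f'_add, heq', ← f'_add]
      congr 1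
  have hper : ∀ t d : ℕ, f' (M + d + t * k) (1 : S) = f' (M + d) (1 : S) := by
    intro t
    induction t with
    | zero => intro d; simp
    | succ t ih =>
      intro d
      have h1 : M + d + (t + 1) * k = M + (d + t * k) + k := by ring
      rw [h1, hstep, ← add_assoc, ih]
  set N := k * (M + 1) with hN
  have hN1 : 1 ≤ N := Nat.mul_pos hk1 (Nat.succ_pos M)
  have hNM : M + 1 ≤ N := by
    calc M + 1 ≤ k * (M + 1) := Nat.le_mul_of_pos_left _ hk1
    _ = N := hN.symm
  set e := f' (N - 1) (1 : S) with he
  have hee : e + e = e := by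
    have hNc : (M + 1) * k = N := by rw [hN]; ring
    have h2 := hper (M + 1) (N - 1 - M)
    rw [hNc] at h2
    have h3 : M + (N - 1 - M) = N - 1 := by omega
    rw [h3] at h2
    have h4 : (N - 1) + (N - 1) + 1 = N - 1 + N := by omega
    rw [he, ← f'_add, h4, h2]
  intro a
  obtain ⟨b, hb⟩ := hdiv a N hN1
  have hab : a = b * e := by
    rw [he, mul_f' hdl, mul_one, ← nmul_eq_f', hb]
  rw [hab, ← hdl, hee]

theorem stmt_13 {S : Type*} [AddCommSemigroup S] [CommMonoid S]
    (hdl : ∀ a b c : S, a * (b + c) = a * b + a * c)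
    (hdr : ∀ a b c : S, (a + b) * c = a * c + b * c)
    (hdiv : ∀ a : S, ∀ n : ℕ, 1 ≤ n → ∃ b : S, nmul n b = a)
    (hone : ∃ m n : ℕ, 1 ≤ m ∧ 1 ≤ n ∧ m ≠ n ∧ nmul m (1 : S) = nmul n (1 : S)) :
    ∀ a : S, a + a = a := by
  obtain ⟨m, n, hm, hn, hmn, heq⟩ := hone
  rcases lt_or_gt_of_ne hmn with h | h
  · exact key_13 hdl hdiv m n hm h heq
  · exact key_13 hdl hdiv n m hn h heq.symm
end

section
/- Let S be an additively divisible semiring (commutative, possibly without neutral elements) generated by a single element w. If w^m has finite order for some m ≥ 1, then S is additively idempotent. -/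
/-- `npow1 m a` is the `m`-fold product `a * ⋯ * a` (for `m ≥ 1`; `npow1 0 a = a` is junk). -/
def npow1 {S : Type*} [Mul S] (m : ℕ) (a : S) : S :=
  Nat.rec a (fun _ b => b * a) (m - 1)

set_option linter.unusedSectionVars false

namespace Stmt16

variable {S : Type*} [AddCommSemigroup S] [CommSemigroup S]

/-- `smul' n a = (n+1)` copies of `a` added. -/
def smul' (n : ℕ) (a : S) : S := Nat.rec a (fun _ b => b + a) n

/-- `pow' m a = a^(m+1)`. -/
def pow' (m : ℕ) (a : S) : S := Nat.rec a (fun _ b => b * a) m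

lemma nmul_eq (n : ℕ) (a : S) : nmul n a = smul' (n-1) a := rfl
lemma npow1_eq (m : ℕ) (a : S) : npow1 m a = pow' (m-1) a := rfl

@[simp] lemma smul'_zero (a : S) : smul' 0 a = a := rfl
lemma smul'_succ (n : ℕ) (a : S) : smul' (n+1) a = smul' n a + a := rfl
@[simp] lemma pow'_zero (a : S) : pow' 0 a = a := rfl
lemma pow'_succ (m : ℕ) (a : S) : pow' (m+1) a = pow' m a * a := rfl

lemma add_smul' (p q : ℕ) (a : S) : smul' p a + smul' q a = smul' (p + q + 1) a := by
  induction q with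
  | zero => rfl
  | succ q ih =>
      rw [smul'_succ, ← add_assoc, ih]
      rfl

lemma smul'_add (n : ℕ) (a b : S) : smul' n (a + b) = smul' n a + smul' n b := by
  induction n with
  | zero => rfl
  | succ n ih =>
      rw [smul'_succ, smul'_succ, smul'_succ, ih, add_add_add_comm]

lemma smul'_smul' (p q : ℕ) (a : S) :
    smul' p (smul' q a) = smul' (p * q + p + q) a := by
  induction p with
  | zero => simp
  | succ p ih =>
      rw [smul'_succ, ih, add_smul']
      congr 1
      ring

lemma pow'_add (e f : ℕ) (a : S) : pow' e a * pow' f a = pow' (e + f + 1) a := by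
  induction f with
  | zero => rfl
  | succ f ih => rw [pow'_succ, ← mul_assoc, ih]; rfl

section distrib
variable (hdl : ∀ a b c : S, a * (b + c) = a * b + a * c)
variable (hdr : ∀ a b c : S, (a + b) * c = a * c + b * c)
include hdl hdr

lemma smul'_mul (n : ℕ) (a b : S) : smul' n a * b = smul' n (a * b) := by
  induction n with
  | zero => rfl
  | succ n ih => rw [smul'_succ, hdr, ih]; rfl

lemma mul_smul' (n : ℕ) (a b : S) : a * smul' n b = smul' n (a * b) := by
  rw [mul_comm, smul'_mul hdl hdr, mul_comm]

lemma smul'_mul_smul' (p q : ℕ) (a b : S) :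
    smul' p a * smul' q b = smul' (p * q + p + q) (a * b) := by
  rw [smul'_mul hdl hdr, mul_smul' hdl hdr, smul'_smul']


lemma pow'_smul' (m n : ℕ) (b : S) :
    pow' m (smul' n b) = smul' ((n+1)^(m+1) - 1) (pow' m b) := by
  induction m with
  | zero => simp
  | succ m ih =>
      rw [pow'_succ, ih, smul'_mul hdl hdr, mul_smul' hdl hdr, smul'_smul', ← pow'_succ]
      congr 1
      have h1 : 1 ≤ (n+1)^(m+1) := Nat.one_le_pow _ _ (by omega)
      have h2 : (n+1)^(m+1+1) = (n+1)^(m+1) * (n+1) := by ring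
      obtain ⟨p, hp⟩ : ∃ p, (n+1)^(m+1) = p + 1 := ⟨(n+1)^(m+1) - 1, by omega⟩
      rw [h2, hp]
      have h3 : (p+1)*(n+1) = p*n + p + n + 1 := by ring
      simp only [Nat.add_sub_cancel]
      omega

end distrib

section gen
variable (hdl : ∀ a b c : S, a * (b + c) = a * b + a * c)
variable (hdr : ∀ a b c : S, (a + b) * c = a * c + b * c)
variable (w : S)

/-- `J δ` : additive closure of powers `w^e` with `e ≥ δ+1`. -/
def J (δ : ℕ) : AddSubsemigroup S :=
  AddSubsemigroup.closure {y | ∃ e, δ ≤ e ∧ y = pow' e w}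

lemma mem_J_pow' {δ e : ℕ} (h : δ ≤ e) : pow' e w ∈ J w δ :=
  AddSubsemigroup.subset_closure ⟨e, h, rfl⟩

lemma J_le {a b : ℕ} (h : a ≤ b) : J w b ≤ J w a :=
  AddSubsemigroup.closure_mono (fun y ⟨e, he, hy⟩ => ⟨e, le_trans h he, hy⟩)

lemma smul'_mem_J {δ : ℕ} {s : S} (hs : s ∈ J w δ) (n : ℕ) : smul' n s ∈ J w δ := by
  induction n with
  | zero => exact hs
  | succ n ih => exact AddSubsemigroup.add_mem _ ih hs

include hdl hdr

lemma mul_mem_J {a b : ℕ} {s t : S} (hs : s ∈ J w a) (ht : t ∈ J w b) :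
    s * t ∈ J w (a + b + 1) := by
  induction hs using AddSubsemigroup.closure_induction with
  | add x y _ _ hx hy =>
      rw [hdr]
      exact AddSubsemigroup.add_mem _ hx hy
  | mem x hx =>
      obtain ⟨e, he, rfl⟩ := hx
      induction ht using AddSubsemigroup.closure_induction with
      | mem y hy =>
          obtain ⟨f, hf, rfl⟩ := hy
          rw [pow'_add]
          exact mem_J_pow' w (by omega)
      | add u v _ _ hu hv =>
          rw [hdl]
          exact AddSubsemigroup.add_mem _ hu hv

lemma pow'_mem_J {a : ℕ} {s : S} (hs : s ∈ J w a) (e : ℕ) :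
    pow' e s ∈ J w ((a+1) * (e+1) - 1) := by
  induction e with
  | zero => simpa using hs
  | succ e ih =>
      rw [pow'_succ]
      have := mul_mem_J hdl hdr w ih hs
      have harith : (a+1) * (e+1) - 1 + a + 1 = (a+1) * (e+1+1) - 1 := by
        have : 1 ≤ (a+1) * (e+1) := Nat.one_le_iff_ne_zero.mpr (by positivity)
        have h2 : (a+1) * (e+1+1) = (a+1)*(e+1) + (a+1) := by ring
        omega
      rwa [harith] at this

end gen

lemma collapse {x : S} {K d : ℕ} (h : smul' (K + d) x = smul' K x) :
    ∀ q, K ≤ q → ∀ t, smul' (q + t * d) x = smul' q x := by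
  have one : ∀ r, smul' (K + r + d) x = smul' (K + r) x := by
    intro r
    induction r with
    | zero => simpa using h
    | succ r ih =>
        have e1 : K + (r+1) + d = (K + r + d) + 1 := by omega
        rw [e1, smul'_succ, ih]
        rfl
  intro q hq t
  induction t with
  | zero => simp
  | succ t ih =>
      obtain ⟨r, hr⟩ := Nat.exists_eq_add_of_le hq
      have e : q + (t+1) * d = K + (r + t * d) + d := by
        have : (t+1) * d = t * d + d := by ring
        omega
      have e3 : q + t * d = K + (r + t * d) := by omega
      rw [e, one, ← e3, ih]

lemma smul'_idem {a : S} (h : a + a = a) (t : ℕ) : smul' t a = a := by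
  induction t with
  | zero => rfl
  | succ t ih => rw [smul'_succ, ih, h]

section gen2
variable (hdl : ∀ a b c : S, a * (b + c) = a * b + a * c)
variable (hdr : ∀ a b c : S, (a + b) * c = a * c + b * c)
variable (w : S)

lemma J_idem {δ : ℕ} (hE : ∀ e, δ ≤ e → pow' e w + pow' e w = pow' e w) :
    ∀ s ∈ J w δ, s + s = s := by
  intro s hs
  induction hs using AddSubsemigroup.closure_induction with
  | mem x hx =>
      obtain ⟨e, he, rfl⟩ := hx
      exact hE e he
  | add x y _ _ hx hy => rw [add_add_add_comm, hx, hy]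

include hdl hdr

lemma J_collapse {δ K d : ℕ}
    (hbase : ∀ q, K ≤ q → ∀ t, smul' (q + t * d) (pow' δ w) = smul' q (pow' δ w)) :
    ∀ s ∈ J w δ, ∀ q, K ≤ q → ∀ t, smul' (q + t * d) s = smul' q s := by
  intro s hs
  induction hs using AddSubsemigroup.closure_induction with
  | mem x hx =>
      obtain ⟨e, he, rfl⟩ := hx
      rcases Nat.eq_or_lt_of_le he with rfl | hlt
      · exact hbase
      · intro q hq t
        have hsplit : pow' e w = pow' δ w * pow' (e - δ - 1) w := by
          rw [pow'_add]
          congr 1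
          omega
        rw [hsplit, ← smul'_mul hdl hdr, ← smul'_mul hdl hdr, hbase q hq t]
  | add x y _ _ ihx ihy =>
      intro q hq t
      rw [smul'_add, smul'_add, ihx q hq t, ihy q hq t]

lemma J_zero_univ (hgen : genClosure {w} = Set.univ) (s : S) : s ∈ J w 0 := by
  have hs : s ∈ genClosure {w} := by rw [hgen]; trivial
  refine Set.mem_sInter.mp hs (J w 0 : Set S) ⟨?_, ?_, ?_⟩
  · exact Set.singleton_subset_iff.mpr (mem_J_pow' w (le_refl 0))
  · exact fun x hx y hy => AddSubsemigroup.add_mem _ hx hy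
  · exact fun x hx y hy => J_le w (by omega) (mul_mem_J hdl hdr w hx hy)

lemma structureLemma (hgen : genClosure {w} = Set.univ) (b : S) :
    (∃ c, b = smul' c w) ∨ (∃ c γ, γ ∈ J w 1 ∧ b = smul' c w + γ) ∨ b ∈ J w 1 := by
  have hb : b ∈ genClosure {w} := by rw [hgen]; trivial
  refine Set.mem_sInter.mp hb
    {b | (∃ c, b = smul' c w) ∨ (∃ c γ, γ ∈ J w 1 ∧ b = smul' c w + γ) ∨ b ∈ J w 1}
    ⟨?_, ?_, ?_⟩
  · exact Set.singleton_subset_iff.mpr (Or.inl ⟨0, rfl⟩)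
  · rintro x (⟨c, rfl⟩ | ⟨c, γ, hγ, rfl⟩ | hx) y (⟨c', rfl⟩ | ⟨c', γ', hγ', rfl⟩ | hy)
    · exact Or.inl ⟨c + c' + 1, add_smul' c c' w⟩
    · refine Or.inr (Or.inl ⟨c + c' + 1, γ', hγ', ?_⟩)
      rw [← add_assoc, add_smul']
    · exact Or.inr (Or.inl ⟨c, y, hy, rfl⟩)
    · refine Or.inr (Or.inl ⟨c + c' + 1, γ, hγ, ?_⟩)
      rw [add_right_comm, add_smul']
    · refine Or.inr (Or.inl ⟨c + c' + 1, γ + γ', AddSubsemigroup.add_mem _ hγ hγ', ?_⟩)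
      rw [add_add_add_comm, add_smul']
    · exact Or.inr (Or.inl ⟨c, γ + y, AddSubsemigroup.add_mem _ hγ hy, by rw [add_assoc]⟩)
    · exact Or.inr (Or.inl ⟨c', x, hx, add_comm x _⟩)
    · exact Or.inr (Or.inl ⟨c', x + γ', AddSubsemigroup.add_mem _ hx hγ',
        by rw [add_left_comm]⟩)
    · exact Or.inr (Or.inr (AddSubsemigroup.add_mem _ hx hy))
  · intro x hx y hy
    refine Or.inr (Or.inr (J_le w (by omega)
      (mul_mem_J hdl hdr w (J_zero_univ hdl hdr w hgen x) (J_zero_univ hdl hdr w hgen y))))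

lemma expansion {γ : S} (hγ : γ ∈ J w 1) (c : ℕ) (δ : ℕ) :
    ∃ γ₂ ∈ J w (δ + 1),
      pow' δ (smul' c w + γ) = smul' ((c+1)^(δ+1) - 1) (pow' δ w) + γ₂ := by
  induction δ with
  | zero =>
      refine ⟨γ, hγ, ?_⟩
      simp
  | succ δ ih =>
      obtain ⟨γ₂, hγ₂, hexp⟩ := ih
      have hN1 : ((c+1)^(δ+1) - 1) + 1 = (c+1)^(δ+1) := by
        have := Nat.one_le_pow (δ+1) (c+1) (by omega)
        omega
      refine ⟨smul' ((c+1)^(δ+1) - 1) (pow' δ w) * γ + (γ₂ * smul' c w + γ₂ * γ), ?_, ?_⟩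
      · refine AddSubsemigroup.add_mem _ ?_ (AddSubsemigroup.add_mem _ ?_ ?_)
        · exact mul_mem_J hdl hdr (a := δ) (b := 1) w
            (smul'_mem_J w (mem_J_pow' w (le_refl δ)) _) hγ
        · exact mul_mem_J hdl hdr (a := δ + 1) (b := 0) w hγ₂
            (smul'_mem_J w (mem_J_pow' w (le_refl 0)) c)
        · exact J_le w (by omega) (mul_mem_J hdl hdr (a := δ + 1) (b := 1) w hγ₂ hγ)
      · rw [pow'_succ, hexp, hdr, hdl, hdl, add_assoc]
        congr 1
        rw [smul'_mul_smul' hdl hdr, ← pow'_succ]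
        congr 1
        obtain ⟨p, hp⟩ : ∃ p, (c+1)^(δ+1) = p + 1 := ⟨(c+1)^(δ+1) - 1, hN1.symm⟩
        have h2 : (c+1)^(δ+1+1) = (p+1)*(c+1) := by rw [pow_succ, hp]
        have h3 : (p+1)*(c+1) = p*c+p+c+1 := by ring
        rw [hp]
        simp only [Nat.add_sub_cancel]
        omega

end gen2

section phases
variable (hdl : ∀ a b c : S, a * (b + c) = a * b + a * c)
variable (hdr : ∀ a b c : S, (a + b) * c = a * c + b * c)
variable (w : S)
include hdl hdr

lemma phase1 (hdiv' : ∀ a : S, ∀ n : ℕ, ∃ b : S, smul' n b = a)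
    (hgen : genClosure {w} = Set.univ) {m' k' d : ℕ} (hd : 1 ≤ d)
    (hx : smul' (k' + d) (pow' m' w) = smul' k' (pow' m' w)) :
    pow' m' w + pow' m' w = pow' m' w := by
  have hcoll := collapse hx
  have hJ := J_collapse hdl hdr w hcoll
  obtain ⟨b, hb⟩ := hdiv' w ((k'+1)*d - 1)
  have hnd : ((k'+1)*d - 1) + 1 = (k'+1)*d := by
    have : 1 ≤ (k'+1)*d := Nat.mul_pos (Nat.succ_pos k') hd
    omega
  have hx2 : pow' m' w = smul' (((k'+1)*d)^(m'+1) - 1) (pow' m' b) := by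
    rw [← hb, pow'_smul' hdl hdr, hnd]
  have hy : pow' m' b ∈ J w m' := by
    have := pow'_mem_J hdl hdr (a := 0) w (J_zero_univ hdl hdr w hgen b) m'
    simpa using this
  have hP1 : 1 ≤ ((k'+1)*d)^(m'+1) := Nat.one_le_pow _ _ (by positivity)
  have hPk : (k'+1)*d ≤ ((k'+1)*d)^(m'+1) := Nat.le_self_pow (by omega) _
  have hkd : k' + 1 ≤ (k'+1)*d := by
    have h1 : (k'+1)*1 ≤ (k'+1)*d := Nat.mul_le_mul_left _ hd
    omega
  have harg := hJ (pow' m' b) hy (((k'+1)*d)^(m'+1) - 1) (by omega)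
      (((k'+1)*d)^m' * (k'+1))
  have htd : ((k'+1)*d)^m' * (k'+1) * d = ((k'+1)*d)^(m'+1) := by
    rw [pow_succ]
    ring
  rw [hx2, add_smul']
  rw [htd] at harg
  have e : ((k'+1)*d)^(m'+1) - 1 + (((k'+1)*d)^(m'+1) - 1) + 1
      = ((k'+1)*d)^(m'+1) - 1 + ((k'+1)*d)^(m'+1) := by omega
  rw [e, harg]

lemma phase2step (hdiv' : ∀ a : S, ∀ n : ℕ, ∃ b : S, smul' n b = a)
    (hgen : genClosure {w} = Set.univ) {δ : ℕ}
    (hE : ∀ e, δ + 1 ≤ e → pow' e w + pow' e w = pow' e w) :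
    pow' δ w + pow' δ w = pow' δ w := by
  have hJE : ∀ s ∈ J w (δ+1), s + s = s := J_idem w hE
  obtain ⟨b, hb⟩ := hdiv' w 1
  have hub : pow' δ w = smul' (2^(δ+1) - 1) (pow' δ b) := by
    rw [← hb, pow'_smul' hdl hdr]
  have hidx : ∀ c : ℕ, (2^(δ+1) - 1) * ((c+1)^(δ+1) - 1) + (2^(δ+1) - 1) + ((c+1)^(δ+1) - 1)
      = (2*(c+1))^(δ+1) - 1 := by
    intro c
    have h1 : 1 ≤ 2^(δ+1) := Nat.one_le_pow _ _ (by omega)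
    have h2 : 1 ≤ (c+1)^(δ+1) := Nat.one_le_pow _ _ (by omega)
    have h3 : (2*(c+1))^(δ+1) = 2^(δ+1) * (c+1)^(δ+1) := by rw [mul_pow]
    obtain ⟨p, hp⟩ : ∃ p, 2^(δ+1) = p + 1 := ⟨2^(δ+1) - 1, by omega⟩
    obtain ⟨q, hq⟩ : ∃ q, (c+1)^(δ+1) = q + 1 := ⟨(c+1)^(δ+1) - 1, by omega⟩
    have h4 : (p+1)*(q+1) = p*q+p+q+1 := by ring
    rw [hp, hq] at h3 ⊢
    simp only [Nat.add_sub_cancel]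
    omega
  have hA2 : ∀ c : ℕ, 2 ≤ (2*(c+1))^(δ+1) := by
    intro c
    calc 2 = 2^1 := rfl
      _ ≤ 2^(δ+1) := Nat.pow_le_pow_right (by omega) (by omega)
      _ ≤ (2*(c+1))^(δ+1) := Nat.pow_le_pow_left (by omega) _
  have main : (∃ A, 2 ≤ A ∧ pow' δ w = smul' (A - 1) (pow' δ w)) ∨
      pow' δ w + pow' δ w = pow' δ w := by
    rcases structureLemma hdl hdr w hgen b with ⟨c, rfl⟩ | ⟨c, γ, hγ, rfl⟩ | hbJ
    · -- b = c • w
      rw [pow'_smul' hdl hdr, smul'_smul', hidx c] at hub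
      exact Or.inl ⟨(2*(c+1))^(δ+1), hA2 c, hub⟩
    · -- b = c • w + γ
      obtain ⟨γ₂, hγ₂, hexp⟩ := expansion hdl hdr w hγ c δ
      have hg : γ₂ + γ₂ = γ₂ := hJE γ₂ hγ₂
      rw [hexp, smul'_add, smul'_smul', hidx c, smul'_idem hg] at hub
      -- hub : pow' δ w = smul' (A - 1) (pow' δ w) + γ₂
      left
      refine ⟨(2*(c+1))^(δ+1), hA2 c, ?_⟩
      have h1 : pow' δ w + γ₂ = pow' δ w := by
        conv_lhs => rw [hub]
        rw [add_assoc, hg, ← hub]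
      conv_lhs => rw [hub]
      rw [← smul'_idem hg ((2*(c+1))^(δ+1) - 1), ← smul'_add, h1]
    · -- b ∈ J w 1
      right
      have hmem : pow' δ b ∈ J w (δ + 1) := by
        have := pow'_mem_J hdl hdr (a := 1) w hbJ δ
        exact J_le w (by omega) this
      have hidem : pow' δ b + pow' δ b = pow' δ b := hJE _ hmem
      rw [hub, smul'_idem hidem]
      exact hidem
  rcases main with ⟨A, hA, hrel⟩ | hdone
  · -- second division by d' = A - 1
    set d' := A - 1 with hd'
    have hd'1 : 1 ≤ d' := by omega
    have hcoll : ∀ q, 0 ≤ q → ∀ t, smul' (q + t * d') (pow' δ w) = smul' q (pow' δ w) := by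
      apply collapse (K := 0)
      simpa using hrel.symm
    have hJ := J_collapse hdl hdr w hcoll
    obtain ⟨b', hb'⟩ := hdiv' w (d' - 1)
    have hnd : (d' - 1) + 1 = d' := by omega
    have hub' : pow' δ w = smul' (d'^(δ+1) - 1) (pow' δ b') := by
      rw [← hb', pow'_smul' hdl hdr, hnd]
    have hy : pow' δ b' ∈ J w δ := by
      have := pow'_mem_J hdl hdr (a := 0) w (J_zero_univ hdl hdr w hgen b') δ
      simpa using this
    have hQ1 : 1 ≤ d'^(δ+1) := Nat.one_le_pow _ _ (by omega)
    have harg := hJ (pow' δ b') hy (d'^(δ+1) - 1) (by omega) (d'^δ)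
    have htd : d'^δ * d' = d'^(δ+1) := by rw [pow_succ]
    rw [htd] at harg
    rw [hub', add_smul']
    have e : d'^(δ+1) - 1 + (d'^(δ+1) - 1) + 1 = d'^(δ+1) - 1 + d'^(δ+1) := by omega
    rw [e, harg]
  · exact hdone

end phases

end Stmt16

open Stmt16 in
theorem stmt_16 {S : Type*} [AddCommSemigroup S] [CommSemigroup S]
    (hdl : ∀ a b c : S, a * (b + c) = a * b + a * c)
    (hdr : ∀ a b c : S, (a + b) * c = a * c + b * c)
    (hdiv : ∀ a : S, ∀ n : ℕ, 1 ≤ n → ∃ b : S, nmul n b = a)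
    (w : S) (hgen : genClosure {w} = Set.univ)
    (hfin : ∃ m : ℕ, 1 ≤ m ∧ ∃ k l : ℕ, 1 ≤ k ∧ 1 ≤ l ∧ k ≠ l ∧
      nmul k (npow1 m w) = nmul l (npow1 m w)) :
    ∀ a : S, a + a = a := by
  have hdiv' : ∀ a : S, ∀ n : ℕ, ∃ b : S, smul' n b = a := by
    intro a n
    obtain ⟨b, hb⟩ := hdiv a (n+1) (by omega)
    exact ⟨b, by rw [← hb]; rfl⟩
  obtain ⟨m, hm, k, l, hk, hl, hkl, heq⟩ := hfin
  have heq' : smul' (k - 1) (pow' (m-1) w) = smul' (l - 1) (pow' (m-1) w) := heq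
  have hx : ∃ d, 1 ≤ d ∧ ∃ k', smul' (k' + d) (pow' (m-1) w) = smul' k' (pow' (m-1) w) := by
    rcases Nat.lt_or_ge k l with h | h
    · refine ⟨l - k, by omega, k - 1, ?_⟩
      have e : (k-1) + (l-k) = l - 1 := by omega
      rw [e]
      exact heq'.symm
    · refine ⟨k - l, by omega, l - 1, ?_⟩
      have e : (l-1) + (k-l) = k - 1 := by omega
      rw [e]
      exact heq'
  obtain ⟨d, hd, k', hx⟩ := hx
  have hxE : pow' (m-1) w + pow' (m-1) w = pow' (m-1) w :=
    phase1 hdl hdr w hdiv' hgen hd hx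
  have descent : ∀ i : ℕ, ∀ e : ℕ, (m-1) - i ≤ e → pow' e w + pow' e w = pow' e w := by
    intro i
    induction i with
    | zero =>
        intro e he
        simp only [Nat.sub_zero] at he
        rcases Nat.eq_or_lt_of_le he with rfl | hlt
        · exact hxE
        · have hsplit : pow' e w = pow' (m-1) w * pow' (e - (m-1) - 1) w := by
            rw [pow'_add]
            congr 1
            omega
          rw [hsplit, ← hdr, hxE]
    | succ i ih =>
        intro e he
        by_cases hcase : (m-1) - i ≤ e
        · exact ih e hcase
        · exact phase2step hdl hdr w hdiv' hgen (fun e' he'' => ih e' (by omega))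
  have hwE : w + w = w := descent (m-1) 0 (by omega)
  intro a
  have ha : a ∈ genClosure {w} := by rw [hgen]; trivial
  refine Set.mem_sInter.mp ha {x | x + x = x} ⟨?_, ?_, ?_⟩
  · exact Set.singleton_subset_iff.mpr hwE
  · intro x hx' y hy'
    simp only [Set.mem_setOf_eq] at *
    rw [add_add_add_comm, hx', hy']
  · intro x hx' y hy'
    simp only [Set.mem_setOf_eq] at *
    rw [← hdr, hx']
end

section
/- Let S be a semiring (commutative, possibly without neutral elements) generated by a single element w. If u ∈ S satisfies w = w·u, then u is a multiplicative identity of S: u·x = x for every x ∈ S. -/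
theorem stmt_17 {S : Type*} [AddCommSemigroup S] [CommSemigroup S]
    (hdl : ∀ a b c : S, a * (b + c) = a * b + a * c)
    (hdr : ∀ a b c : S, (a + b) * c = a * c + b * c)
    (w : S) (hgen : genClosure {w} = Set.univ)
    (u : S) (hu : w = w * u) :
    ∀ x : S, u * x = x := by
  intro x
  have hsub : genClosure {w} ⊆ {x : S | u * x = x} := by
    apply Set.sInter_subset_of_mem
    refine ⟨?_, ?_, ?_⟩
    · intro y hy
      rcases hy with rfl
      show u * y = y
      rw [mul_comm]; exact hu.symm
    · intro a ha b hb
      show u * (a + b) = a + b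
      rw [hdl, ha, hb]
    · intro a hb b hb'
      show u * (a * b) = a * b
      rw [← mul_assoc, hb]
  have := hsub (hgen ▸ Set.mem_univ x)
  exact this
end

section
/- Let S be an additively divisible semiring (commutative, possibly without neutral elements) generated by a single element w, and suppose that either w = k·w for some k ≥ 2, or w = k·w + u for some k ≥ 2 and some u ∈ S. Then either x + x = x for every x ∈ S, or there exists a ∈ S such that x = 2·x + a·x for every x ∈ S. -/
namespace Stmt18

variable {S : Type*} [AddCommSemigroup S] [CommSemigroup S]

/-- `NN k a = (k+1) • a`. -/
def NN (n : ℕ) (a : S) : S := nmul (n + 1) a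

theorem NN_zero (a : S) : NN 0 a = a := rfl
theorem NN_one (a : S) : NN 1 a = a + a := rfl
theorem NN_succ (n : ℕ) (a : S) : NN (n + 1) a = NN n a + a := rfl
theorem NN_congr {i j : ℕ} (h : i = j) (a : S) : NN i a = NN j a := by rw [h]

theorem NN_add (m n : ℕ) (a : S) : NN (m + n + 1) a = NN m a + NN n a := by
  induction n with
  | zero => rfl
  | succ n ih =>
    have h : m + (n + 1) + 1 = (m + n + 1) + 1 := by omega
    rw [NN_congr h, NN_succ, ih, NN_succ, add_assoc]

theorem NN_dist (n : ℕ) (a b : S) : NN n (a + b) = NN n a + NN n b := by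
  induction n with
  | zero => rfl
  | succ n ih =>
    rw [NN_succ, ih, NN_succ, NN_succ, add_add_add_comm]

theorem NN_mul_left (hdl : ∀ a b c : S, a * (b + c) = a * b + a * c)
    (n : ℕ) (x a : S) : x * NN n a = NN n (x * a) := by
  induction n with
  | zero => rfl
  | succ n ih => rw [NN_succ, hdl, ih, NN_succ]

theorem NN_mul_right (hdr : ∀ a b c : S, (a + b) * c = a * c + b * c)
    (n : ℕ) (a x : S) : NN n a * x = NN n (a * x) := by
  induction n with
  | zero => rfl
  | succ n ih => rw [NN_succ, hdr, ih, NN_succ]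

theorem NN_NN (m n : ℕ) (a : S) : NN m (NN n a) = NN (m * n + m + n) a := by
  induction m with
  | zero =>
    show NN n a = NN (0 * n + 0 + n) a
    exact NN_congr (by ring) a
  | succ m ih =>
    calc NN (m + 1) (NN n a) = NN m (NN n a) + NN n a := NN_succ _ _
      _ = NN (m * n + m + n) a + NN n a := by rw [ih]
      _ = NN ((m * n + m + n) + n + 1) a := (NN_add _ _ a).symm
      _ = NN ((m + 1) * n + (m + 1) + n) a := NN_congr (by ring) a

theorem gen_ind (w : S) (hgen : genClosure {w} = Set.univ) (T : Set S)
    (h1 : w ∈ T)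
    (h2 : ∀ x ∈ T, ∀ y ∈ T, x + y ∈ T)
    (h3 : ∀ x ∈ T, ∀ y ∈ T, x * y ∈ T) (x : S) : x ∈ T := by
  have hx : x ∈ genClosure ({w} : Set S) := by rw [hgen]; exact Set.mem_univ x
  exact Set.mem_sInter.mp hx T ⟨Set.singleton_subset_iff.mpr h1, h2, h3⟩

theorem decomp (hdl : ∀ a b c : S, a * (b + c) = a * b + a * c)
    (hdr : ∀ a b c : S, (a + b) * c = a * c + b * c)
    (w : S) (hgen : genClosure {w} = Set.univ) (x : S) :
    (∃ k, x = NN k w) ∨ (∃ c, x = c * w) ∨ (∃ k c, x = NN k w + c * w) := by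
  refine gen_ind w hgen
    {t | (∃ k, t = NN k w) ∨ (∃ c, t = c * w) ∨ (∃ k c, t = NN k w + c * w)}
    (Or.inl ⟨0, rfl⟩) ?_ ?_ x
  · rintro u (⟨k, rfl⟩ | ⟨c, rfl⟩ | ⟨k, c, rfl⟩) v (⟨l, rfl⟩ | ⟨d, rfl⟩ | ⟨l, d, rfl⟩)
    · exact Or.inl ⟨k + l + 1, (NN_add k l w).symm⟩
    · exact Or.inr (Or.inr ⟨k, d, rfl⟩)
    · exact Or.inr (Or.inr ⟨k + l + 1, d, by
        rw [NN_add]; exact (add_assoc _ _ _).symm⟩)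
    · exact Or.inr (Or.inr ⟨l, c, add_comm _ _⟩)
    · exact Or.inr (Or.inl ⟨c + d, (hdr c d w).symm⟩)
    · exact Or.inr (Or.inr ⟨l, c + d, by
        rw [hdr]; exact add_left_comm _ _ _⟩)
    · exact Or.inr (Or.inr ⟨k + l + 1, c, by
        rw [NN_add]
        simp only [add_comm, add_left_comm, add_assoc]⟩)
    · exact Or.inr (Or.inr ⟨k, c + d, by
        rw [hdr]; exact add_assoc _ _ _⟩)
    · exact Or.inr (Or.inr ⟨k + l + 1, c + d, by
        rw [NN_add, hdr]
        simp only [add_comm, add_left_comm, add_assoc]⟩)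
  · rintro u _ v (⟨l, rfl⟩ | ⟨d, rfl⟩ | ⟨l, d, rfl⟩)
    · exact Or.inr (Or.inl ⟨NN l u, by rw [NN_mul_left hdl, NN_mul_right hdr]⟩)
    · exact Or.inr (Or.inl ⟨u * d, (mul_assoc u d w).symm⟩)
    · exact Or.inr (Or.inl ⟨NN l u + u * d, by
        rw [hdl, hdr, NN_mul_left hdl, NN_mul_right hdr, ← mul_assoc]⟩)

theorem goal1 (hdr : ∀ a b c : S, (a + b) * c = a * c + b * c)
    (w : S) (hgen : genClosure {w} = Set.univ) (h : w + w = w) :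
    ∀ x : S, x + x = x := by
  intro x
  have hx : x ∈ {t : S | t + t = t} := by
    refine gen_ind w hgen {t : S | t + t = t} h ?_ ?_ x
    · intro u hu v hv
      have hu' : u + u = u := hu
      have hv' : v + v = v := hv
      show (u + v) + (u + v) = u + v
      rw [add_add_add_comm, hu', hv']
    · intro u hu v _
      have hu' : u + u = u := hu
      show (u * v) + (u * v) = u * v
      rw [← hdr, hu']
  exact hx

theorem goal2 (hdl : ∀ a b c : S, a * (b + c) = a * b + a * c)
    (hdr : ∀ a b c : S, (a + b) * c = a * c + b * c)
    (w : S) (hgen : genClosure {w} = Set.univ) (a : S)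
    (h : w = (w + w) + a * w) :
    ∃ b : S, ∀ x : S, x = nmul 2 x + b * x := by
  refine ⟨a, fun x => ?_⟩
  have hx : x ∈ {t : S | t = (t + t) + a * t} := by
    refine gen_ind w hgen {t : S | t = (t + t) + a * t} h ?_ ?_ x
    · intro u hu v hv
      have hu' : u = (u + u) + a * u := hu
      have hv' : v = (v + v) + a * v := hv
      show u + v = ((u + v) + (u + v)) + a * (u + v)
      have hstep : ((u + v) + (u + v)) + a * (u + v)
          = ((u + u) + a * u) + ((v + v) + a * v) := by
        rw [hdl]
        simp only [add_comm, add_left_comm, add_assoc]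
      rw [hstep, ← hu', ← hv']
    · intro u hu v _
      have hu' : u = (u + u) + a * u := hu
      show u * v = ((u * v) + (u * v)) + a * (u * v)
      have hstep : ((u * v) + (u * v)) + a * (u * v) = ((u + u) + a * u) * v := by
        rw [hdr, hdr, ← mul_assoc]
      rw [hstep, ← hu']
  have hx' : x = (x + x) + a * x := hx
  exact hx'

theorem absorb (w z : S) (hz : w = w + z) : ∀ i : ℕ, w = w + NN i z := by
  intro i
  induction i with
  | zero => exact hz
  | succ i ih =>
    calc w = w + z := hz
      _ = (w + NN i z) + z := by rw [← ih]
      _ = w + NN (i + 1) z := by rw [NN_succ, ← add_assoc]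

theorem zabs (w z : S) (hzw : z + w = w) : ∀ k : ℕ, z + NN k w = NN k w := by
  intro k
  induction k with
  | zero => exact hzw
  | succ k ih =>
    calc z + NN (k + 1) w = z + (NN k w + w) := by rw [NN_succ]
      _ = (z + NN k w) + w := (add_assoc _ _ _).symm
      _ = NN k w + w := by rw [ih]
      _ = NN (k + 1) w := (NN_succ _ _).symm

theorem c1 (hdr : ∀ a b c : S, (a + b) * c = a * c + b * c)
    (w : S) {p r : ℕ} {x y : S} (hr : 1 ≤ r)
    (h1 : w = NN p w + x * w) (h2 : w = NN r w + y * w) :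
    w = NN (p + r) w + (x + y) * w := by
  obtain ⟨r', rfl⟩ : ∃ r', r = r' + 1 := ⟨r - 1, by omega⟩
  have key : NN (p + (r' + 1)) w + (x + y) * w = w := by
    calc NN (p + (r' + 1)) w + (x + y) * w
        = (NN r' w + NN p w) + (x * w + y * w) := by
          rw [NN_congr (show p + (r' + 1) = r' + p + 1 by omega) w, NN_add, hdr]
      _ = (NN r' w + (NN p w + x * w)) + y * w := by simp only [add_assoc]
      _ = (NN r' w + w) + y * w := by rw [← h1]
      _ = NN (r' + 1) w + y * w := by rw [NN_succ]
      _ = w := h2.symm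
  exact key.symm

theorem mix_iter (hdr : ∀ a b c : S, (a + b) * c = a * c + b * c)
    (w : S) {r : ℕ} (hr : 1 ≤ r) {E : S}
    (hmix : w = NN r w + E * w) :
    ∀ i : ℕ, w = NN ((i + 1) * r) w + NN i E * w := by
  intro i
  induction i with
  | zero =>
    calc w = NN r w + E * w := hmix
      _ = NN ((0 + 1) * r) w + NN 0 E * w := by
          rw [NN_congr (show (0 + 1) * r = r by ring) w]
          rfl
  | succ i ih =>
    have hc := c1 hdr w hr ih hmix
    calc w = NN ((i + 1) * r + r) w + (NN i E + E) * w := hc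
      _ = NN ((i + 1 + 1) * r) w + NN (i + 1) E * w := by
          rw [NN_congr (show (i + 1) * r + r = (i + 1 + 1) * r by ring) w, ← NN_succ]

theorem purecase (hdl : ∀ a b c : S, a * (b + c) = a * b + a * c)
    (hdr : ∀ a b c : S, (a + b) * c = a * c + b * c)
    (w : S) (hgen : genClosure {w} = Set.univ)
    (hdiv : ∀ a : S, ∀ n : ℕ, 1 ≤ n → ∃ b : S, nmul n b = a)
    (d : ℕ) (hd : 1 ≤ d) (h : w = NN d w) :
    (∀ x : S, x + x = x) ∨ (∃ b : S, ∀ x : S, x = nmul 2 x + b * x) := by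
  rcases Nat.lt_or_ge d 2 with hd2 | hd2
  · -- d = 1 : idempotent
    have hd1 : d = 1 := by omega
    subst hd1
    exact Or.inl (goal1 hdr w hgen h.symm)
  · obtain ⟨d', rfl⟩ : ∃ d', d = d' + 2 := ⟨d - 2, by omega⟩
    have hz : w = w + NN (d' + 1) w := by
      calc w = NN (d' + 2) w := h
        _ = NN (0 + (d' + 1) + 1) w := NN_congr (by omega) w
        _ = NN 0 w + NN (d' + 1) w := NN_add 0 (d' + 1) w
        _ = w + NN (d' + 1) w := rfl
    have habs := absorb w (NN (d' + 1) w) hz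
    have hpump : ∀ i : ℕ, w = NN ((i + 1) * (d' + 2)) w := by
      intro i
      calc w = w + NN i (NN (d' + 1) w) := habs i
        _ = w + NN (i * (d' + 1) + i + (d' + 1)) w := by rw [NN_NN]
        _ = NN (0 + (i * (d' + 1) + i + (d' + 1)) + 1) w :=
            (NN_add 0 (i * (d' + 1) + i + (d' + 1)) w).symm
        _ = NN ((i + 1) * (d' + 2)) w := NN_congr (by ring) w
    obtain ⟨b, hb⟩ := hdiv w (d' + 2) (by omega)
    have hb' : NN (d' + 1) b = w := hb
    rcases decomp hdl hdr w hgen b with ⟨j, hbj⟩ | ⟨e, hbe⟩ | ⟨j, e, hbje⟩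
    · -- pure outcome : idempotent
      have hpure : w = NN ((d' + 1) * j + (d' + 1) + j) w := by
        calc w = NN (d' + 1) b := hb'.symm
          _ = NN (d' + 1) (NN j w) := by rw [hbj]
          _ = NN ((d' + 1) * j + (d' + 1) + j) w := NN_NN _ _ w
      refine Or.inl (goal1 hdr w hgen ?_)
      calc w + w = w + NN ((d' + 1) * j + (d' + 1) + j) w := by rw [← hpure]
        _ = NN (0 + ((d' + 1) * j + (d' + 1) + j) + 1) w :=
            (NN_add 0 ((d' + 1) * j + (d' + 1) + j) w).symm
        _ = NN ((j + 1) * (d' + 2)) w := NN_congr (by ring) w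
        _ = w := (hpump j).symm
    · -- star outcome
      have hstar : w = NN (d' + 1) e * w := by
        calc w = NN (d' + 1) b := hb'.symm
          _ = NN (d' + 1) (e * w) := by rw [hbe]
          _ = NN (d' + 1) e * w := (NN_mul_right hdr _ _ _).symm
      refine Or.inr (goal2 hdl hdr w hgen (NN d' (NN (d' + 1) e)) ?_)
      have key : (w + w) + NN d' (NN (d' + 1) e) * w = w := by
        calc (w + w) + NN d' (NN (d' + 1) e) * w
            = (w + w) + NN d' (NN (d' + 1) e * w) := by rw [NN_mul_right hdr]
          _ = (w + w) + NN d' w := by rw [← hstar]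
          _ = NN 1 w + NN d' w := rfl
          _ = NN (1 + d' + 1) w := (NN_add _ _ w).symm
          _ = NN (d' + 2) w := NN_congr (by omega) w
          _ = w := h.symm
      exact key.symm
    · -- mixed outcome : residue trick
      have hmixP : w = NN ((d' + 1) * j + (d' + 1) + j) w + NN (d' + 1) e * w := by
        calc w = NN (d' + 1) b := hb'.symm
          _ = NN (d' + 1) (NN j w + e * w) := by rw [hbje]
          _ = NN (d' + 1) (NN j w) + NN (d' + 1) (e * w) := NN_dist _ _ _
          _ = NN ((d' + 1) * j + (d' + 1) + j) w + NN (d' + 1) e * w := by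
              rw [NN_NN, ← NN_mul_right hdr]
      have hr1 : 1 ≤ (d' + 1) * j + (d' + 1) + j := by omega
      have hbig := mix_iter hdr w hr1 hmixP d'
      have harith : (d' + 1) * ((d' + 1) * j + (d' + 1) + j)
          = (d' + 2) * ((d' + 1) * j + d') + 1 := by ring
      by_cases hs0 : (d' + 1) * j + d' = 0
      · refine Or.inr (goal2 hdl hdr w hgen (NN d' (NN (d' + 1) e)) ?_)
        calc w = NN ((d' + 1) * ((d' + 1) * j + (d' + 1) + j)) w
              + NN d' (NN (d' + 1) e) * w := hbig
          _ = NN 1 w + NN d' (NN (d' + 1) e) * w := by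
              rw [NN_congr (show (d' + 1) * ((d' + 1) * j + (d' + 1) + j) = 1 by
                rw [harith, hs0]; ring) w]
          _ = (w + w) + NN d' (NN (d' + 1) e) * w := rfl
      · obtain ⟨s', hs'⟩ : ∃ s', (d' + 1) * j + d' = s' + 1 :=
          ⟨(d' + 1) * j + d' - 1, by omega⟩
        refine Or.inr (goal2 hdl hdr w hgen (NN d' (NN (d' + 1) e)) ?_)
        have key : (w + w) + NN d' (NN (d' + 1) e) * w = w := by
          calc (w + w) + NN d' (NN (d' + 1) e) * w
              = (w + NN ((s' + 1) * (d' + 2)) w) + NN d' (NN (d' + 1) e) * w := by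
                rw [← hpump s']
            _ = NN (0 + ((s' + 1) * (d' + 2)) + 1) w + NN d' (NN (d' + 1) e) * w := by
                rw [NN_add, NN_zero]
            _ = NN ((d' + 1) * ((d' + 1) * j + (d' + 1) + j)) w
                + NN d' (NN (d' + 1) e) * w := by
                rw [NN_congr (show 0 + ((s' + 1) * (d' + 2)) + 1
                    = (d' + 1) * ((d' + 1) * j + (d' + 1) + j) by
                  rw [harith, hs']; ring) w]
            _ = w := hbig.symm
        exact key.symm

theorem mixcase (hdl : ∀ a b c : S, a * (b + c) = a * b + a * c)
    (hdr : ∀ a b c : S, (a + b) * c = a * c + b * c)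
    (w : S) (hgen : genClosure {w} = Set.univ)
    (hdiv : ∀ a : S, ∀ n : ℕ, 1 ≤ n → ∃ b : S, nmul n b = a)
    (q : ℕ) (hq : 1 ≤ q) (a : S) (h : w = NN q w + a * w) :
    (∀ x : S, x + x = x) ∨ (∃ b : S, ∀ x : S, x = nmul 2 x + b * x) := by
  rcases Nat.lt_or_ge q 2 with hq2 | hq2
  · have hq1 : q = 1 := by omega
    subst hq1
    exact Or.inr (goal2 hdl hdr w hgen a h)
  · obtain ⟨q', rfl⟩ : ∃ q', q = q' + 2 := ⟨q - 2, by omega⟩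
    obtain ⟨b, hb⟩ := hdiv w (q' + 2) (by omega)
    have hb' : NN (q' + 1) b = w := hb
    rcases decomp hdl hdr w hgen b with ⟨j, hbj⟩ | ⟨e, hbe⟩ | ⟨j, e, hbje⟩
    · -- pure outcome : go to purecase
      have hpure : w = NN ((q' + 1) * j + (q' + 1) + j) w := by
        calc w = NN (q' + 1) b := hb'.symm
          _ = NN (q' + 1) (NN j w) := by rw [hbj]
          _ = NN ((q' + 1) * j + (q' + 1) + j) w := NN_NN _ _ w
      exact purecase hdl hdr w hgen hdiv _ (by omega) hpure
    · -- star outcome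
      have hstar : w = NN (q' + 1) e * w := by
        calc w = NN (q' + 1) b := hb'.symm
          _ = NN (q' + 1) (e * w) := by rw [hbe]
          _ = NN (q' + 1) e * w := (NN_mul_right hdr _ _ _).symm
      refine Or.inr (goal2 hdl hdr w hgen (NN q' (NN (q' + 1) e) + a) ?_)
      have key : (w + w) + (NN q' (NN (q' + 1) e) + a) * w = w := by
        calc (w + w) + (NN q' (NN (q' + 1) e) + a) * w
            = (w + w) + (NN q' (NN (q' + 1) e) * w + a * w) := by rw [hdr]
          _ = (w + w) + (NN q' (NN (q' + 1) e * w) + a * w) := by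
              rw [NN_mul_right hdr]
          _ = (w + w) + (NN q' w + a * w) := by rw [← hstar]
          _ = ((w + w) + NN q' w) + a * w := (add_assoc _ _ _).symm
          _ = NN (1 + q' + 1) w + a * w := by rw [NN_add]; rfl
          _ = NN (q' + 2) w + a * w := by
              rw [NN_congr (show 1 + q' + 1 = q' + 2 by omega) w]
          _ = w := h.symm
      exact key.symm
    · -- mixed outcome : the assembly
      have hmix2 : w = NN ((q' + 1) * j + (q' + 1) + j) w + NN (q' + 1) e * w := by
        calc w = NN (q' + 1) b := hb'.symm
          _ = NN (q' + 1) (NN j w + e * w) := by rw [hbje]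
          _ = NN (q' + 1) (NN j w) + NN (q' + 1) (e * w) := NN_dist _ _ _
          _ = NN ((q' + 1) * j + (q' + 1) + j) w + NN (q' + 1) e * w := by
              rw [NN_NN, ← NN_mul_right hdr]
      by_cases hr1 : (q' + 1) * j + (q' + 1) + j = 1
      · refine Or.inr (goal2 hdl hdr w hgen (NN (q' + 1) e) ?_)
        calc w = NN ((q' + 1) * j + (q' + 1) + j) w + NN (q' + 1) e * w := hmix2
          _ = NN 1 w + NN (q' + 1) e * w := by rw [NN_congr hr1 w]
          _ = (w + w) + NN (q' + 1) e * w := rfl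
      · obtain ⟨r'', hr''⟩ : ∃ r'', (q' + 1) * j + (q' + 1) + j = r'' + 2 :=
          ⟨(q' + 1) * j + (q' + 1) + j - 2, by omega⟩
        have hmix2' : w = NN (r'' + 2) w + NN (q' + 1) e * w := by
          calc w = NN ((q' + 1) * j + (q' + 1) + j) w + NN (q' + 1) e * w := hmix2
            _ = NN (r'' + 2) w + NN (q' + 1) e * w := by rw [NN_congr hr'' w]
        -- absorbing element z₁ from the base relation
        have hz1 : w = w + (NN (q' + 1) w + a * w) := by
          calc w = NN (q' + 2) w + a * w := h
            _ = NN (0 + (q' + 1) + 1) w + a * w := by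
                rw [NN_congr (show q' + 2 = 0 + (q' + 1) + 1 by omega) w]
            _ = (NN 0 w + NN (q' + 1) w) + a * w := by rw [NN_add]
            _ = w + (NN (q' + 1) w + a * w) := add_assoc _ _ _
        have habs1 := absorb w _ hz1
        have hjz : NN j (NN (q' + 1) w + a * w) = NN (r'' + 2) w + NN j a * w := by
          calc NN j (NN (q' + 1) w + a * w)
              = NN j (NN (q' + 1) w) + NN j (a * w) := NN_dist _ _ _
            _ = NN (j * (q' + 1) + j + (q' + 1)) w + NN j a * w := by
                rw [NN_NN, ← NN_mul_right hdr]
            _ = NN (r'' + 2) w + NN j a * w := by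
                rw [NN_congr (show j * (q' + 1) + j + (q' + 1) = r'' + 2 by
                  rw [← hr'']; ring) w]
        -- absorbing idempotent z₂ from the division relation
        have hz2 : w = w + (NN (r'' + 1) w + NN (q' + 1) e * w) := by
          calc w = NN (r'' + 2) w + NN (q' + 1) e * w := hmix2'
            _ = NN (0 + (r'' + 1) + 1) w + NN (q' + 1) e * w := by
                rw [NN_congr (show r'' + 2 = 0 + (r'' + 1) + 1 by omega) w]
            _ = (NN 0 w + NN (r'' + 1) w) + NN (q' + 1) e * w := by rw [NN_add]
            _ = w + (NN (r'' + 1) w + NN (q' + 1) e * w) := add_assoc _ _ _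
        have hz2w : (NN (r'' + 1) w + NN (q' + 1) e * w) + w = w := by
          rw [add_comm]; exact hz2.symm
        have hzz : (NN (r'' + 1) w + NN (q' + 1) e * w)
            + (NN (r'' + 1) w + NN (q' + 1) e * w)
            = NN (r'' + 1) w + NN (q' + 1) e * w := by
          have h1 := zabs w _ hz2w (r'' + 1)
          calc (NN (r'' + 1) w + NN (q' + 1) e * w)
              + (NN (r'' + 1) w + NN (q' + 1) e * w)
              = ((NN (r'' + 1) w + NN (q' + 1) e * w) + NN (r'' + 1) w)
                + NN (q' + 1) e * w := (add_assoc _ _ _).symm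
            _ = NN (r'' + 1) w + NN (q' + 1) e * w := by rw [h1]
        -- the pump identity
        have hpumpE : (NN (q' + 1) e * w + NN (q' + 1) e * w)
            + (NN r'' (NN (q' + 1) e) * w + (NN (q' + 1) e * NN (q' + 1) e) * w)
            = NN (q' + 1) e * w := by
          calc (NN (q' + 1) e * w + NN (q' + 1) e * w)
              + (NN r'' (NN (q' + 1) e) * w + (NN (q' + 1) e * NN (q' + 1) e) * w)
              = (NN 1 (NN (q' + 1) e * w) + NN r'' (NN (q' + 1) e * w))
                + (NN (q' + 1) e * NN (q' + 1) e) * w := by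
                rw [← NN_one (NN (q' + 1) e * w), NN_mul_right hdr r'' (NN (q' + 1) e) w,
                  ← add_assoc]
            _ = NN (1 + r'' + 1) (NN (q' + 1) e * w)
                + (NN (q' + 1) e * NN (q' + 1) e) * w := by rw [NN_add]
            _ = NN (r'' + 2) (NN (q' + 1) e * w)
                + (NN (q' + 1) e * NN (q' + 1) e) * w := by
                rw [NN_congr (show 1 + r'' + 1 = r'' + 2 by omega) (NN (q' + 1) e * w)]
            _ = NN (q' + 1) e * NN (r'' + 2) w
                + NN (q' + 1) e * (NN (q' + 1) e * w) := by
                rw [← NN_mul_left hdl, mul_assoc]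
            _ = NN (q' + 1) e * (NN (r'' + 2) w + NN (q' + 1) e * w) := (hdl _ _ _).symm
            _ = NN (q' + 1) e * w := by rw [← hmix2']
        refine Or.inr (goal2 hdl hdr w hgen
          (NN r'' (NN (q' + 1) e) + (NN (q' + 1) e * NN (q' + 1) e + NN j a)) ?_)
        calc w = w + NN j (NN (q' + 1) w + a * w) := habs1 j
          _ = w + (NN (r'' + 2) w + NN j a * w) := by rw [hjz]
          _ = w + ((w + NN (r'' + 1) w) + NN j a * w) := by
              rw [show NN (r'' + 2) w = w + NN (r'' + 1) w by
                rw [NN_congr (show r'' + 2 = 0 + (r'' + 1) + 1 by omega) w, NN_add,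
                  NN_zero]]
          _ = (w + w) + (NN (r'' + 1) w + NN j a * w) := by
              simp only [add_assoc]
          _ = ((w + (NN (r'' + 1) w + NN (q' + 1) e * w)) + w)
              + (NN (r'' + 1) w + NN j a * w) := by rw [← hz2]
          _ = (w + w) + ((NN (r'' + 1) w + NN (r'' + 1) w)
              + (NN (q' + 1) e * w + NN j a * w)) := by
              simp only [add_comm, add_left_comm, add_assoc]
          _ = (w + w) + ((NN (r'' + 1) w + NN (r'' + 1) w)
              + (((NN (q' + 1) e * w + NN (q' + 1) e * w)
                + (NN r'' (NN (q' + 1) e) * w + (NN (q' + 1) e * NN (q' + 1) e) * w))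
                + NN j a * w)) := by rw [hpumpE]
          _ = (w + w) + (((NN (r'' + 1) w + NN (q' + 1) e * w)
              + (NN (r'' + 1) w + NN (q' + 1) e * w))
              + (NN r'' (NN (q' + 1) e) * w
                + ((NN (q' + 1) e * NN (q' + 1) e) * w + NN j a * w))) := by
              simp only [add_comm, add_left_comm, add_assoc]
          _ = (w + w) + ((NN (r'' + 1) w + NN (q' + 1) e * w)
              + (NN r'' (NN (q' + 1) e) * w
                + ((NN (q' + 1) e * NN (q' + 1) e) * w + NN j a * w))) := by rw [hzz]
          _ = ((w + (NN (r'' + 1) w + NN (q' + 1) e * w)) + w)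
              + (NN r'' (NN (q' + 1) e) * w
                + ((NN (q' + 1) e * NN (q' + 1) e) * w + NN j a * w)) := by
              simp only [add_comm, add_left_comm, add_assoc]
          _ = (w + w) + (NN r'' (NN (q' + 1) e) * w
                + ((NN (q' + 1) e * NN (q' + 1) e) * w + NN j a * w)) := by rw [← hz2]
          _ = (w + w) + (NN r'' (NN (q' + 1) e)
                + (NN (q' + 1) e * NN (q' + 1) e + NN j a)) * w := by rw [hdr, hdr]

end Stmt18

open Stmt18 in
theorem stmt_18 {S : Type*} [AddCommSemigroup S] [CommSemigroup S]
    (hdl : ∀ a b c : S, a * (b + c) = a * b + a * c)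
    (hdr : ∀ a b c : S, (a + b) * c = a * c + b * c)
    (hdiv : ∀ a : S, ∀ n : ℕ, 1 ≤ n → ∃ b : S, nmul n b = a)
    (w : S) (hgen : genClosure {w} = Set.univ)
    (hw : (∃ k : ℕ, 2 ≤ k ∧ w = nmul k w) ∨ (∃ k : ℕ, 2 ≤ k ∧ ∃ u : S, w = nmul k w + u)) :
    (∀ x : S, x + x = x) ∨ (∃ a : S, ∀ x : S, x = nmul 2 x + a * x) := by
  rcases hw with ⟨k, hk, hkw⟩ | ⟨k, hk, u, hku⟩
  · obtain ⟨k', rfl⟩ : ∃ k', k = k' + 2 := ⟨k - 2, by omega⟩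
    exact purecase hdl hdr w hgen hdiv (k' + 1) (by omega) hkw
  · obtain ⟨k', rfl⟩ : ∃ k', k = k' + 2 := ⟨k - 2, by omega⟩
    rcases decomp hdl hdr w hgen u with ⟨j, huj⟩ | ⟨c, huc⟩ | ⟨j, c, hujc⟩
    · refine purecase hdl hdr w hgen hdiv ((k' + 1) + j + 1) (by omega) ?_
      calc w = NN (k' + 1) w + u := hku
        _ = NN (k' + 1) w + NN j w := by rw [huj]
        _ = NN ((k' + 1) + j + 1) w := (NN_add _ _ w).symm
    · refine mixcase hdl hdr w hgen hdiv (k' + 1) (by omega) c ?_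
      calc w = NN (k' + 1) w + u := hku
        _ = NN (k' + 1) w + c * w := by rw [huc]
    · refine mixcase hdl hdr w hgen hdiv ((k' + 1) + j + 1) (by omega) c ?_
      calc w = NN (k' + 1) w + u := hku
        _ = NN (k' + 1) w + (NN j w + c * w) := by rw [hujc]
        _ = (NN (k' + 1) w + NN j w) + c * w := (add_assoc _ _ _).symm
        _ = NN ((k' + 1) + j + 1) w + c * w := by rw [NN_add]
end

section
/- Let S be an additively divisible semiring (commutative, possibly without neutral elements) generated by a single element w, and suppose S has no multiplicative identity (there is no e ∈ S with e·x = x for all x ∈ S). Then either S is additively idempotent, or there exists a ∈ S such that the set I = {u + a·u : u ∈ S} is an ideal of S (I is closed under addition and s·t ∈ I for every s ∈ S and t ∈ I) all of whose elements are additively idempotent (t + t = t for every t ∈ I). -/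
set_option linter.unusedSectionVars false
set_option maxHeartbeats 1000000

namespace Stmt19Aux

variable {S : Type*} [AddCommSemigroup S] [CommSemigroup S]

/-- `pm n a` is the `(n+1)`-fold sum of `a`. -/
def pm (n : ℕ) (a : S) : S := Nat.rec a (fun _ b => b + a) n

@[simp] lemma pm_zero (a : S) : pm 0 a = a := rfl

lemma pm_succ (n : ℕ) (a : S) : pm (n + 1) a = pm n a + a := rfl

lemma pm_succ' (n : ℕ) (a : S) : pm n a + a = pm (n + 1) a := rfl

lemma nmul_eq_pm (n : ℕ) (a : S) : nmul n a = pm (n - 1) a := rfl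

lemma pm_add_pm (m n : ℕ) (a : S) : pm m a + pm n a = pm (m + n + 1) a := by
  induction n with
  | zero => rfl
  | succ n ih =>
    rw [pm_succ, ← add_assoc, ih]
    rfl

lemma pm_add (n : ℕ) (a b : S) : pm n (a + b) = pm n a + pm n b := by
  induction n with
  | zero => rfl
  | succ n ih => rw [pm_succ, ih, pm_succ, pm_succ, add_add_add_comm]

lemma mul_pm (hdl : ∀ a b c : S, a * (b + c) = a * b + a * c) (n : ℕ) (a b : S) :
    a * pm n b = pm n (a * b) := by
  induction n with
  | zero => rfl
  | succ n ih => rw [pm_succ, hdl, ih, pm_succ]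

lemma pm_mul (hdr : ∀ a b c : S, (a + b) * c = a * c + b * c) (n : ℕ) (a b : S) :
    pm n a * b = pm n (a * b) := by
  induction n with
  | zero => rfl
  | succ n ih => rw [pm_succ, hdr, ih, pm_succ]

lemma pm_pm (j k : ℕ) (a : S) : pm j (pm k a) = pm (j + k + j * k) a := by
  induction j with
  | zero => simp
  | succ j ih =>
    rw [pm_succ, ih, pm_add_pm]
    congr 1
    ring

lemma pm_absorb {y : S} {j : ℕ} (h : y = pm j y) (k : ℕ) : pm k y = pm (k + j) y := by
  induction k with
  | zero => simpa using h
  | succ k ih =>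
    rw [pm_succ, ih, pm_succ']
    congr 1
    omega

lemma pm_absorb' {y z : S} {j : ℕ} (h : y = pm j y + z) (k : ℕ) :
    pm k y = pm (k + j) y + z := by
  induction k with
  | zero => simpa using h
  | succ k ih =>
    calc pm (k + 1) y = pm k y + y := rfl
    _ = (pm (k + j) y + z) + y := by rw [ih]
    _ = (pm (k + j) y + y) + z := by ac_rfl
    _ = pm (k + j + 1) y + z := by rw [pm_succ']
    _ = pm (k + 1 + j) y + z := by congr 2; omega

/-- Induction principle from `genClosure {w} = univ`. -/
lemma gen_all {w : S} (hgen : genClosure {w} = Set.univ) (T : Set S)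
    (hw : w ∈ T) (hadd : ∀ x ∈ T, ∀ y ∈ T, x + y ∈ T)
    (hmul : ∀ x ∈ T, ∀ y ∈ T, x * y ∈ T) : ∀ x, x ∈ T := by
  intro x
  have hx : x ∈ genClosure {w} := by rw [hgen]; trivial
  exact Set.mem_sInter.mp hx T ⟨Set.singleton_subset_iff.2 hw, hadd, hmul⟩

/-- Every element of `S` is of one of the three forms. -/
lemma forms {w : S} (hdl : ∀ a b c : S, a * (b + c) = a * b + a * c)
    (hdr : ∀ a b c : S, (a + b) * c = a * c + b * c)
    (hgen : genClosure {w} = Set.univ) :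
    ∀ x : S, (∃ n y, x = pm n w + w * y) ∨ (∃ n, x = pm n w) ∨ (∃ y, x = w * y) := by
  apply gen_all hgen
  · exact Or.inr (Or.inl ⟨0, rfl⟩)
  · rintro x hx y hy
    rcases hx with ⟨n, u, rfl⟩ | ⟨n, rfl⟩ | ⟨u, rfl⟩ <;>
      rcases hy with ⟨m, v, rfl⟩ | ⟨m, rfl⟩ | ⟨v, rfl⟩
    · exact Or.inl ⟨n + m + 1, u + v, by rw [hdl, ← pm_add_pm]; ac_rfl⟩
    · exact Or.inl ⟨n + m + 1, u, by rw [← pm_add_pm]; ac_rfl⟩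
    · exact Or.inl ⟨n, u + v, by rw [hdl]; ac_rfl⟩
    · exact Or.inl ⟨n + m + 1, v, by rw [← pm_add_pm]; ac_rfl⟩
    · exact Or.inr (Or.inl ⟨n + m + 1, by rw [← pm_add_pm]⟩)
    · exact Or.inl ⟨n, v, rfl⟩
    · exact Or.inl ⟨m, u + v, by rw [hdl]; ac_rfl⟩
    · exact Or.inl ⟨m, u, by ac_rfl⟩
    · exact Or.inr (Or.inr ⟨u + v, by rw [hdl]⟩)
  · rintro x hx y -
    -- every product with left factor of one of the forms is of the form w * z
    have key : ∀ z : S, (∃ n u, z = pm n w + w * u) ∨ (∃ n, z = pm n w) ∨ (∃ u, z = w * u) →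
        ∃ v, z * y = w * v := by
      rintro z (⟨n, u, rfl⟩ | ⟨n, rfl⟩ | ⟨u, rfl⟩)
      · refine ⟨pm n y + u * y, ?_⟩
        rw [hdr, pm_mul hdr, hdl, mul_pm hdl, mul_assoc]
      · exact ⟨pm n y, by rw [pm_mul hdr, mul_pm hdl]⟩
      · exact ⟨u * y, mul_assoc w u y⟩
    obtain ⟨v, hv⟩ := key x hx
    exact Or.inr (Or.inr ⟨v, hv⟩)

/-- No element acts as a right unit on `w`, else `S` has a multiplicative unit. -/
lemma no_unit {w : S} (hdl : ∀ a b c : S, a * (b + c) = a * b + a * c)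
    (hgen : genClosure {w} = Set.univ)
    (hnounit : ¬ ∃ e : S, ∀ x : S, e * x = x) (z : S) (h : w = w * z) : False := by
  apply hnounit
  refine ⟨z, ?_⟩
  have : ∀ x, x ∈ {x : S | z * x = x} := by
    apply gen_all hgen
    · show z * w = w
      rw [mul_comm]; exact h.symm
    · intro x hx y hy
      show z * (x + y) = x + y
      rw [hdl, hx, hy]
    · intro x hx y _
      show z * (x * y) = x * y
      rw [← mul_assoc, hx]
  exact this

/-- Propagate an impure relation at `w` to all of `S`. -/
lemma prop_imp {w : S} (hdl : ∀ a b c : S, a * (b + c) = a * b + a * c)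
    (hdr : ∀ a b c : S, (a + b) * c = a * c + b * c)
    (hgen : genClosure {w} = Set.univ) (d : ℕ) (c : S)
    (h : w = pm d w + c * w) : ∀ x : S, x = pm d x + c * x := by
  have : ∀ x, x ∈ {x : S | x = pm d x + c * x} := by
    apply gen_all hgen
    · exact h
    · intro x hx y hy
      show x + y = pm d (x + y) + c * (x + y)
      rw [pm_add, hdl]
      calc x + y = (pm d x + c * x) + (pm d y + c * y) := by rw [← hx, ← hy]
      _ = pm d x + pm d y + (c * x + c * y) := by ac_rfl
    · intro x hx y _
      show x * y = pm d (x * y) + c * (x * y)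
      calc x * y = (pm d x + c * x) * y := by rw [← hx]
      _ = pm d x * y + (c * x) * y := hdr _ _ _
      _ = pm d (x * y) + c * (x * y) := by rw [pm_mul hdr, mul_assoc]
  exact this

/-- Propagate a pure relation at `w` to all of `S`. -/
lemma prop_pure {w : S} (hdr : ∀ a b c : S, (a + b) * c = a * c + b * c)
    (hgen : genClosure {w} = Set.univ) (d : ℕ)
    (h : w = pm d w) : ∀ x : S, x = pm d x := by
  have : ∀ x, x ∈ {x : S | x = pm d x} := by
    apply gen_all hgen
    · exact h
    · intro x hx y hy
      show x + y = pm d (x + y)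
      rw [pm_add]
      rw [← hx, ← hy]
    · intro x hx y _
      show x * y = pm d (x * y)
      rw [← pm_mul hdr]
      rw [← hx]
  exact this

/-- Iterating an impure relation. -/
lemma iter_imp {d : ℕ} (hd : 1 ≤ d) {c : S} (h : ∀ x : S, x = pm d x + c * x) :
    ∀ (x : S) (n : ℕ), x = pm ((n + 1) * d) x + pm n (c * x) := by
  intro x n
  induction n with
  | zero => simpa using h x
  | succ n ih =>
    have h1 : 1 ≤ (n + 1) * d := Nat.one_le_iff_ne_zero.2
      (Nat.mul_ne_zero (Nat.succ_ne_zero n) (by omega))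
    obtain ⟨m, hm⟩ : ∃ m, (n + 1) * d = m + 1 :=
      ⟨(n + 1) * d - 1, (Nat.succ_pred_eq_of_pos h1).symm⟩
    have h2 : (n + 1 + 1) * d = m + 1 + d := by
      have : (n + 1 + 1) * d = (n + 1) * d + d := by ring
      rw [this, hm]
    have h3 : m + d + 1 = m + 1 + d := by omega
    calc x = pm ((n + 1) * d) x + pm n (c * x) := ih
    _ = (pm m x + x) + pm n (c * x) := by rw [hm, pm_succ]
    _ = (pm m x + (pm d x + c * x)) + pm n (c * x) := by rw [← h x]
    _ = (pm m x + pm d x) + (pm n (c * x) + c * x) := by ac_rfl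
    _ = pm (m + d + 1) x + pm (n + 1) (c * x) := by rw [pm_add_pm, pm_succ']
    _ = pm ((n + 1 + 1) * d) x + pm (n + 1) (c * x) := by rw [h2, h3]

/-- Iterating a pure relation. -/
lemma iter_pure {d : ℕ} (h : ∀ x : S, x = pm d x) :
    ∀ (x : S) (n : ℕ), x = pm ((n + 1) * d) x := by
  intro x n
  induction n with
  | zero => simpa using h x
  | succ n ih =>
    calc x = pm ((n + 1) * d) x := ih
    _ = pm ((n + 1) * d + d) x := pm_absorb (h x) _
    _ = pm ((n + 1 + 1) * d) x := by congr 1; ring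


/-- Spread additive idempotency of `w` to all of `S`. -/
lemma idem_all {w : S} (hdr : ∀ a b c : S, (a + b) * c = a * c + b * c)
    (hgen : genClosure {w} = Set.univ) (hww : w + w = w) : ∀ x : S, x + x = x := by
  have : ∀ x, x ∈ {x : S | x + x = x} := by
    apply gen_all hgen
    · exact hww
    · intro x hx y hy
      show (x + y) + (x + y) = x + y
      calc (x + y) + (x + y) = (x + x) + (y + y) := by ac_rfl
      _ = x + y := by rw [hx, hy]
    · intro x hx y _
      show (x * y) + (x * y) = x * y
      rw [← hdr, hx]
  exact this

/-- Spread idempotency of `w + a*w` to all `u + a*u`. -/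
lemma idem_spread {w : S} (hdl : ∀ a b c : S, a * (b + c) = a * b + a * c)
    (hdr : ∀ a b c : S, (a + b) * c = a * c + b * c)
    (hgen : genClosure {w} = Set.univ) (a : S)
    (hw : (w + a * w) + (w + a * w) = w + a * w) :
    ∀ u : S, (u + a * u) + (u + a * u) = u + a * u := by
  have : ∀ u, u ∈ {u : S | (u + a * u) + (u + a * u) = u + a * u} := by
    apply gen_all hgen
    · exact hw
    · intro x hx y hy
      show ((x + y) + a * (x + y)) + ((x + y) + a * (x + y)) = (x + y) + a * (x + y)
      have e : (x + y) + a * (x + y) = (x + a * x) + (y + a * y) := by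
        rw [hdl]; ac_rfl
      rw [e]
      calc ((x + a * x) + (y + a * y)) + ((x + a * x) + (y + a * y))
          = ((x + a * x) + (x + a * x)) + ((y + a * y) + (y + a * y)) := by ac_rfl
      _ = (x + a * x) + (y + a * y) := by rw [hx, hy]
    · intro x hx y _
      show ((x * y) + a * (x * y)) + ((x * y) + a * (x * y)) = (x * y) + a * (x * y)
      have e : (x * y) + a * (x * y) = (x + a * x) * y := by
        rw [hdr, mul_assoc]
      rw [e, ← hdr, hx]
  exact this

/-- The core argument: given one relation at `w`, produce idempotency or a good `a`. -/
lemma core {w : S} (hdl : ∀ a b c : S, a * (b + c) = a * b + a * c)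
    (hdr : ∀ a b c : S, (a + b) * c = a * c + b * c)
    (hdiv : ∀ a : S, ∀ n : ℕ, 1 ≤ n → ∃ b : S, nmul n b = a)
    (hgen : genClosure {w} = Set.univ)
    (hnounit : ¬ ∃ e : S, ∀ x : S, e * x = x)
    (d₀ : ℕ) (hd₀ : 1 ≤ d₀)
    (rel0 : (∃ c₀ : S, ∀ x : S, x = pm d₀ x + c₀ * x) ∨ (∀ x : S, x = pm d₀ x)) :
    (∀ x : S, x + x = x) ∨ ∃ a : S, (w + a * w) + (w + a * w) = w + a * w := by
  -- obtain a second relation whose "degree + 1" is divisible by d₀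
  have second : ∃ d₁ : ℕ, (∃ k, d₁ + 1 = d₀ * k) ∧
      ((∃ c₁ : S, ∀ x : S, x = pm d₁ x + c₁ * x) ∨ (∀ x : S, x = pm d₁ x)) := by
    rcases Nat.lt_or_ge d₀ 2 with h2 | h2
    · have hd1 : d₀ = 1 := by omega
      exact ⟨0, ⟨1, by omega⟩, Or.inr (fun x => rfl)⟩
    · obtain ⟨e, he⟩ : ∃ e, d₀ = e + 1 := ⟨d₀ - 1, by omega⟩
      obtain ⟨b, hb⟩ := hdiv w d₀ (by omega)
      have hb1 : pm (d₀ - 1) b = w := hb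
      have hb' : pm e b = w := by rwa [show d₀ - 1 = e by omega] at hb1
      rcases forms hdl hdr hgen b with ⟨n, y, rfl⟩ | ⟨n, rfl⟩ | ⟨y, rfl⟩
      · have hw : w = pm (e + n + e * n) w + pm e y * w := by
          calc w = pm e (pm n w + w * y) := hb'.symm
          _ = pm e (pm n w) + pm e (w * y) := pm_add _ _ _
          _ = pm (e + n + e * n) w + pm e y * w := by
              rw [pm_pm, ← mul_pm hdl, mul_comm w (pm e y)]
        exact ⟨e + n + e * n, ⟨n + 1, by rw [he]; ring⟩,
          Or.inl ⟨pm e y, prop_imp hdl hdr hgen _ _ hw⟩⟩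
      · have hw : w = pm (e + n + e * n) w := by
          calc w = pm e (pm n w) := hb'.symm
          _ = pm (e + n + e * n) w := pm_pm _ _ _
        exact ⟨e + n + e * n, ⟨n + 1, by rw [he]; ring⟩,
          Or.inr (prop_pure hdr hgen _ hw)⟩
      · exact absurd hb' (fun hb'' =>
          no_unit hdl hgen hnounit (pm e y)
            (by rw [← mul_pm hdl] at hb''; exact hb''.symm))
  obtain ⟨d₁, ⟨k, hk⟩, rel1⟩ := second
  obtain ⟨n₀, rfl⟩ : ∃ n₀, k = n₀ + 1 := by
    rcases k with _ | n₀
    · simp at hk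
    · exact ⟨n₀, rfl⟩
  have hDD : (n₀ + 1) * d₀ = d₁ + 1 := by rw [hk]; ring
  obtain ⟨b₀, hb₀⟩ : ∃ b₀, 2 * d₀ = b₀ + 2 := ⟨2 * d₀ - 2, by omega⟩
  rcases rel0 with ⟨c₀, R0⟩ | R0 <;> rcases rel1 with ⟨c₁, R1⟩ | R1
  · -- both impure
    right
    refine ⟨pm n₀ c₀ + (pm b₀ c₁ + pm 1 (c₀ * c₁)), ?_⟩
    have hA : (pm n₀ c₀ + (pm b₀ c₁ + pm 1 (c₀ * c₁))) * w
        = pm n₀ (c₀ * w) + (pm b₀ (c₁ * w) + pm 1 (c₀ * (c₁ * w))) := by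
      rw [hdr, hdr, pm_mul hdr, pm_mul hdr, pm_mul hdr, mul_assoc]
    have F1 : w = pm ((n₀ + 1) * d₀) w + pm n₀ (c₀ * w) := iter_imp hd₀ R0 w n₀
    have F2 : w = pm d₁ w + c₁ * w := R1 w
    have F3 : c₁ * w = pm (2 * d₀) (c₁ * w) + pm 1 (c₀ * (c₁ * w)) := by
      have h3 := iter_imp hd₀ R0 (c₁ * w) 1
      rwa [show (1 + 1) * d₀ = 2 * d₀ by ring] at h3
    rw [hA]
    have eL : w + (pm n₀ (c₀ * w) + (pm b₀ (c₁ * w) + pm 1 (c₀ * (c₁ * w))))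
        = pm ((n₀ + 1) * d₀) w + (pm (n₀ + n₀ + 1) (c₀ * w)
            + (pm (b₀ + 2 * d₀) (c₁ * w) + pm 3 (c₀ * (c₁ * w)))) := by
      calc w + (pm n₀ (c₀ * w) + (pm b₀ (c₁ * w) + pm 1 (c₀ * (c₁ * w))))
          = (pm ((n₀ + 1) * d₀) w + pm n₀ (c₀ * w))
            + (pm n₀ (c₀ * w) + (pm b₀ (c₁ * w) + pm 1 (c₀ * (c₁ * w)))) := by rw [← F1]
      _ = (pm ((n₀ + 1) * d₀) w + pm n₀ (c₀ * w))
            + (pm n₀ (c₀ * w) + ((pm (b₀ + 2 * d₀) (c₁ * w) + pm 1 (c₀ * (c₁ * w)))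
              + pm 1 (c₀ * (c₁ * w)))) := by rw [pm_absorb' F3 b₀]
      _ = pm ((n₀ + 1) * d₀) w + ((pm n₀ (c₀ * w) + pm n₀ (c₀ * w))
            + (pm (b₀ + 2 * d₀) (c₁ * w)
              + (pm 1 (c₀ * (c₁ * w)) + pm 1 (c₀ * (c₁ * w))))) := by ac_rfl
      _ = _ := by rw [pm_add_pm, pm_add_pm]
    have eR : (w + (pm n₀ (c₀ * w) + (pm b₀ (c₁ * w) + pm 1 (c₀ * (c₁ * w)))))
          + (w + (pm n₀ (c₀ * w) + (pm b₀ (c₁ * w) + pm 1 (c₀ * (c₁ * w)))))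
        = pm ((n₀ + 1) * d₀) w + (pm (n₀ + n₀ + 1) (c₀ * w)
            + (pm (b₀ + 2 * d₀) (c₁ * w) + pm 3 (c₀ * (c₁ * w)))) := by
      calc (w + (pm n₀ (c₀ * w) + (pm b₀ (c₁ * w) + pm 1 (c₀ * (c₁ * w)))))
            + (w + (pm n₀ (c₀ * w) + (pm b₀ (c₁ * w) + pm 1 (c₀ * (c₁ * w)))))
          = ((pm d₁ w + c₁ * w) + (pm n₀ (c₀ * w) + (pm b₀ (c₁ * w) + pm 1 (c₀ * (c₁ * w)))))
            + (w + (pm n₀ (c₀ * w) + (pm b₀ (c₁ * w) + pm 1 (c₀ * (c₁ * w))))) := by rw [← F2]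
      _ = (pm d₁ w + w) + ((pm n₀ (c₀ * w) + pm n₀ (c₀ * w))
            + (((pm b₀ (c₁ * w) + pm b₀ (c₁ * w)) + c₁ * w)
              + (pm 1 (c₀ * (c₁ * w)) + pm 1 (c₀ * (c₁ * w))))) := by ac_rfl
      _ = pm (d₁ + 1) w + (pm (n₀ + n₀ + 1) (c₀ * w)
            + ((pm (b₀ + b₀ + 1) (c₁ * w) + c₁ * w)
              + pm (1 + 1 + 1) (c₀ * (c₁ * w)))) := by
          rw [pm_succ', pm_add_pm, pm_add_pm, pm_add_pm]
      _ = pm (d₁ + 1) w + (pm (n₀ + n₀ + 1) (c₀ * w)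
            + (pm (b₀ + b₀ + 1 + 1) (c₁ * w) + pm (1 + 1 + 1) (c₀ * (c₁ * w)))) := by
          rw [pm_succ']
      _ = _ := by
          rw [← hDD, show b₀ + b₀ + 1 + 1 = b₀ + 2 * d₀ by omega]
    exact eR.trans eL.symm
  · -- R0 impure, R1 pure
    right
    refine ⟨pm n₀ c₀, ?_⟩
    have hA : pm n₀ c₀ * w = pm n₀ (c₀ * w) := pm_mul hdr _ _ _
    have F1 : w = pm ((n₀ + 1) * d₀) w + pm n₀ (c₀ * w) := iter_imp hd₀ R0 w n₀
    have F2 : w = pm d₁ w := R1 w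
    rw [hA]
    have eL : w + pm n₀ (c₀ * w) = pm ((n₀ + 1) * d₀) w + pm (n₀ + n₀ + 1) (c₀ * w) := by
      calc w + pm n₀ (c₀ * w)
          = (pm ((n₀ + 1) * d₀) w + pm n₀ (c₀ * w)) + pm n₀ (c₀ * w) := by rw [← F1]
      _ = pm ((n₀ + 1) * d₀) w + (pm n₀ (c₀ * w) + pm n₀ (c₀ * w)) := add_assoc _ _ _
      _ = _ := by rw [pm_add_pm]
    have eR : (w + pm n₀ (c₀ * w)) + (w + pm n₀ (c₀ * w))
        = pm ((n₀ + 1) * d₀) w + pm (n₀ + n₀ + 1) (c₀ * w) := by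
      calc (w + pm n₀ (c₀ * w)) + (w + pm n₀ (c₀ * w))
          = (pm d₁ w + pm n₀ (c₀ * w)) + (w + pm n₀ (c₀ * w)) := by rw [← F2]
      _ = (pm d₁ w + w) + (pm n₀ (c₀ * w) + pm n₀ (c₀ * w)) := by ac_rfl
      _ = pm (d₁ + 1) w + pm (n₀ + n₀ + 1) (c₀ * w) := by rw [pm_succ', pm_add_pm]
      _ = _ := by rw [← hDD]
    exact eR.trans eL.symm
  · -- R0 pure, R1 impure
    right
    refine ⟨pm b₀ c₁, ?_⟩
    have hA : pm b₀ c₁ * w = pm b₀ (c₁ * w) := pm_mul hdr _ _ _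
    have F1 : w = pm ((n₀ + 1) * d₀) w := iter_pure R0 w n₀
    have F2 : w = pm d₁ w + c₁ * w := R1 w
    have F3 : c₁ * w = pm (2 * d₀) (c₁ * w) := by
      have h3 := iter_pure R0 (c₁ * w) 1
      rwa [show (1 + 1) * d₀ = 2 * d₀ by ring] at h3
    rw [hA]
    have eL : w + pm b₀ (c₁ * w)
        = pm ((n₀ + 1) * d₀) w + pm (b₀ + 2 * d₀) (c₁ * w) := by
      calc w + pm b₀ (c₁ * w) = pm ((n₀ + 1) * d₀) w + pm b₀ (c₁ * w) := by rw [← F1]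
      _ = _ := by rw [pm_absorb F3 b₀]
    have eR : (w + pm b₀ (c₁ * w)) + (w + pm b₀ (c₁ * w))
        = pm ((n₀ + 1) * d₀) w + pm (b₀ + 2 * d₀) (c₁ * w) := by
      calc (w + pm b₀ (c₁ * w)) + (w + pm b₀ (c₁ * w))
          = ((pm d₁ w + c₁ * w) + pm b₀ (c₁ * w)) + (w + pm b₀ (c₁ * w)) := by rw [← F2]
      _ = (pm d₁ w + w) + ((pm b₀ (c₁ * w) + pm b₀ (c₁ * w)) + c₁ * w) := by ac_rfl
      _ = pm (d₁ + 1) w + (pm (b₀ + b₀ + 1) (c₁ * w) + c₁ * w) := by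
          rw [pm_succ', pm_add_pm]
      _ = pm (d₁ + 1) w + pm (b₀ + b₀ + 1 + 1) (c₁ * w) := by rw [pm_succ']
      _ = _ := by rw [← hDD, show b₀ + b₀ + 1 + 1 = b₀ + 2 * d₀ by omega]
    exact eR.trans eL.symm
  · -- both pure
    left
    have F1 : w = pm ((n₀ + 1) * d₀) w := iter_pure R0 w n₀
    have F2 : w = pm d₁ w := R1 w
    have hww : w + w = w := by
      calc w + w = w + pm d₁ w := by rw [← F2]
      _ = pm d₁ w + w := add_comm _ _
      _ = pm (d₁ + 1) w := pm_succ' _ _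
      _ = pm ((n₀ + 1) * d₀) w := by rw [hDD]
      _ = w := F1.symm
    exact idem_all hdr hgen hww

end Stmt19Aux

open Stmt19Aux

theorem stmt_19 {S : Type*} [AddCommSemigroup S] [CommSemigroup S]
    (hdl : ∀ a b c : S, a * (b + c) = a * b + a * c)
    (hdr : ∀ a b c : S, (a + b) * c = a * c + b * c)
    (hdiv : ∀ a : S, ∀ n : ℕ, 1 ≤ n → ∃ b : S, nmul n b = a)
    (w : S) (hgen : genClosure {w} = Set.univ)
    (hnounit : ¬ ∃ e : S, ∀ x : S, e * x = x) :
    (∀ a : S, a + a = a) ∨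
    (∃ a : S, (∀ s ∈ {y : S | ∃ u : S, y = u + a * u}, ∀ t ∈ {y : S | ∃ u : S, y = u + a * u},
        s + t ∈ {y : S | ∃ u : S, y = u + a * u}) ∧
      (∀ s : S, ∀ t ∈ {y : S | ∃ u : S, y = u + a * u}, s * t ∈ {y : S | ∃ u : S, y = u + a * u}) ∧
      (∀ t ∈ {y : S | ∃ u : S, y = u + a * u}, t + t = t)) := by
  obtain ⟨b, hb⟩ := hdiv w 2 (by norm_num)
  have hb1 : pm 1 b = w := hb
  have core_out : (∀ x : S, x + x = x) ∨ ∃ a : S, (w + a * w) + (w + a * w) = w + a * w := by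
    rcases forms hdl hdr hgen b with ⟨n, y, rfl⟩ | ⟨n, rfl⟩ | ⟨y, rfl⟩
    · have hw : w = pm (1 + n + 1 * n) w + pm 1 y * w := by
        calc w = pm 1 (pm n w + w * y) := hb1.symm
        _ = pm 1 (pm n w) + pm 1 (w * y) := pm_add _ _ _
        _ = pm (1 + n + 1 * n) w + pm 1 y * w := by
            rw [pm_pm, ← mul_pm hdl, mul_comm w (pm 1 y)]
      exact core hdl hdr hdiv hgen hnounit (1 + n + 1 * n) (by omega)
        (Or.inl ⟨pm 1 y, prop_imp hdl hdr hgen _ _ hw⟩)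
    · have hw : w = pm (1 + n + 1 * n) w := by
        calc w = pm 1 (pm n w) := hb1.symm
        _ = pm (1 + n + 1 * n) w := pm_pm _ _ _
      exact core hdl hdr hdiv hgen hnounit (1 + n + 1 * n) (by omega)
        (Or.inr (prop_pure hdr hgen _ hw))
    · exact absurd hb1 (fun hb'' =>
        no_unit hdl hgen hnounit (pm 1 y)
          (by rw [← mul_pm hdl] at hb''; exact hb''.symm))
  rcases core_out with h | ⟨a, ha⟩
  · exact Or.inl h
  · right
    refine ⟨a, ?_, ?_, ?_⟩
    · rintro s ⟨u, rfl⟩ t ⟨v, rfl⟩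
      exact ⟨u + v, by rw [hdl]; ac_rfl⟩
    · rintro s t ⟨u, rfl⟩
      exact ⟨s * u, by rw [hdl, mul_left_comm]⟩
    · rintro t ⟨u, rfl⟩
      exact idem_spread hdl hdr hgen a ha u
end
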